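/- arXiv:0711.2490 — 15 statements merged into one kernel-verified Lean document; each statement's English description precedes it below -/
import Mathlib

section
/- The symmetric maximum is associative on every triple whose maximum is not the negation of its minimum: for all a, b, c ∈ L, if max(a, b, c) ≠ −min(a, b, c), then (a ⊻ b) ⊻ c = a ⊻ (b ⊻ c). -/
/-- The symmetric maximum on a linear order `L` with negation `neg` and
distinguished element `zero`; `max x (neg x)` plays the role of `|x|`. -/
def symMax {L : Type*} [LinearOrder L] (neg : L → L) (zero : L) (a b : L) : L :=
  if b = neg a then zero
  else if max (max a (neg a)) (max b (neg b)) = neg a ∨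
          max (max a (neg a)) (max b (neg b)) = neg b then
    neg (max (max a (neg a)) (max b (neg b)))
  else max (max a (neg a)) (max b (neg b))

/-- The symmetric minimum on a linear order `L` with negation `neg` and
distinguished element `zero`. -/
def symMin {L : Type*} [LinearOrder L] (neg : L → L) (zero : L) (a b : L) : L :=
  if (a < zero ∧ zero < b) ∨ (b < zero ∧ zero < a) then
    neg (min (max a (neg a)) (max b (neg b)))
  else min (max a (neg a)) (max b (neg b))

/-- The splitting-rule evaluation `⟨⊻ s⟩₋⁺` of a finite multiset `s`:
the symmetric maximum of the max of the nonnegative terms (`zero` if none)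
and the min of the negative terms (`zero` if none). -/
def splitEval {L : Type*} [LinearOrder L] (neg : L → L) (zero : L) (s : Multiset L) : L :=
  symMax neg zero ((s.filter (fun x => zero ≤ x)).fold max zero)
    ((s.filter (fun x => x < zero)).fold min zero)

/-- the symmetric maximum is associative on every triple whose
maximum is not the negation of its minimum. -/
theorem symMax_assoc_of_max_ne_neg_min {L : Type*} [LinearOrder L]
    (neg : L → L) (zero : L)
    (hinv : ∀ x, neg (neg x) = x)
    (hord : ∀ x y, x ≤ y ↔ neg y ≤ neg x)
    (hzero : neg zero = zero)
    (a b c : L) (h : max a (max b c) ≠ neg (min a (min b c))) :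
    symMax neg zero (symMax neg zero a b) c = symMax neg zero a (symMax neg zero b c) := by
  have hneg_le : ∀ x y, x ≤ y → neg y ≤ neg x := fun x y hxy => (hord x y).mp hxy
  have habs_neg : ∀ x, max (neg x) (neg (neg x)) = max x (neg x) := by
    intro x; rw [hinv, max_comm]
  have habs_nonneg : ∀ x, zero ≤ max x (neg x) := by
    intro x
    rcases le_total zero x with hx | hx
    · exact le_max_of_le_left hx
    · have h2 := hneg_le _ _ hx
      rw [hzero] at h2
      exact le_max_of_le_right h2
  have hmin_neg : ∀ x, min x (neg x) = neg (max x (neg x)) := by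
    intro x
    rcases le_total x (neg x) with hx | hx
    · rw [min_eq_left hx, max_eq_right hx, hinv]
    · rw [min_eq_right hx, max_eq_left hx]
  -- key lemma: if v = neg u and |w| ≤ |u| then max of triple = neg (min of triple)
  have hK : ∀ u v w, v = neg u → max w (neg w) ≤ max u (neg u) →
      max u (max v w) = neg (min u (min v w)) := by
    intro u v w hv hw
    subst hv
    have h1 : w ≤ max u (neg u) := le_trans (le_max_left _ _) hw
    have h2 : neg (max u (neg u)) ≤ w := by
      have h3 := hneg_le _ _ (le_trans (le_max_right w (neg w)) hw)
      rwa [hinv] at h3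
    rw [← max_assoc, max_eq_left h1, ← min_assoc, hmin_neg, min_eq_left h2, hinv]
  -- characterization of symMax
  have hS : ∀ x y, symMax neg zero x y =
      if y = neg x then zero
      else if max x (neg x) ≤ max y (neg y) then y else x := by
    intro x y
    unfold symMax
    by_cases hxy : y = neg x
    · rw [if_pos hxy, if_pos hxy]
    · rw [if_neg hxy, if_neg hxy]
      by_cases hAB : max x (neg x) ≤ max y (neg y)
      · rw [if_pos hAB, max_eq_right hAB]
        have hBy := max_choice y (neg y)
        by_cases hcond : max y (neg y) = neg x ∨ max y (neg y) = neg y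
        · rw [if_pos hcond]
          rcases hBy with h1 | h1
          · rcases hcond with h2 | h2
            · exact absurd (h1.symm.trans h2) hxy
            · rw [h2, hinv]
          · rw [h1, hinv]
        · rw [if_neg hcond]
          push_neg at hcond
          rcases hBy with h1 | h1
          · exact h1
          · exact absurd h1 hcond.2
      · rw [if_neg hAB, max_eq_left (not_le.mp hAB).le]
        have hlt := not_le.mp hAB
        have hAx := max_choice x (neg x)
        by_cases hcond : max x (neg x) = neg x ∨ max x (neg x) = neg y
        · rw [if_pos hcond]
          rcases hcond with h2 | h2
          · rw [h2, hinv]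
          · exfalso
            have h3 : neg y < max x (neg x) := lt_of_le_of_lt (le_max_right y (neg y)) hlt
            exact absurd h2 h3.ne'
        · rw [if_neg hcond]
          push_neg at hcond
          rcases hAx with h1 | h1
          · exact h1
          · exact absurd h1 hcond.1
  have hS0 : ∀ x, symMax neg zero zero x = x := by
    intro x
    rw [hS]
    by_cases hx : x = neg zero
    · rw [if_pos hx, hx, hzero]
    · rw [if_neg hx, if_pos]
      rw [hzero, max_self]
      exact habs_nonneg x
  have hSz0 : ∀ x, symMax neg zero x zero = x := by
    intro x
    rw [hS]
    by_cases hx : x = zero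
    · subst hx
      rw [if_pos hzero.symm]
    · have hxz : zero ≠ neg x := by
        intro hz
        apply hx
        have := congrArg neg hz
        rw [hinv, hzero] at this
        exact this.symm
      rw [if_neg hxz, if_neg]
      intro hle
      apply hx
      rw [hzero, max_self] at hle
      have h1 : x ≤ zero := le_trans (le_max_left x (neg x)) hle
      have h2 : neg x ≤ zero := le_trans (le_max_right x (neg x)) hle
      have h3 := hneg_le _ _ h2
      rw [hinv, hzero] at h3
      exact le_antisymm h1 h3
  by_cases hba : b = neg a
  · -- case 1: b = neg a
    have hCA : ¬ max c (neg c) ≤ max a (neg a) := by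
      intro hle
      exact h (hK a b c hba hle)
    have hcb : c ≠ neg b := by
      intro hc
      rw [hba, hinv] at hc
      exact hCA (by rw [hc])
    have hca : c ≠ neg a := by
      intro hc
      exact hCA (by rw [hc, habs_neg])
    have hBC : max b (neg b) ≤ max c (neg c) := by
      rw [hba, habs_neg]
      exact (not_le.mp hCA).le
    have hAC : max a (neg a) ≤ max c (neg c) := (not_le.mp hCA).le
    rw [hS a b, if_pos hba, hS0 c, hS b c, if_neg hcb, if_pos hBC,
      hS a c, if_neg hca, if_pos hAC]
  · by_cases hAB : max a (neg a) ≤ max b (neg b)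
    · -- S a b = b
      by_cases hcb : c = neg b
      · -- vacuous by h
        exfalso
        apply h
        have hk := hK b c a hcb hAB
        calc max a (max b c) = max b (max c a) := by rw [max_comm c a, max_left_comm]
          _ = neg (min b (min c a)) := hk
          _ = neg (min a (min b c)) := by rw [min_comm c a, min_left_comm]
      · by_cases hBC : max b (neg b) ≤ max c (neg c)
        · by_cases hca : c = neg a
          · exfalso
            apply h
            have hBA : max b (neg b) ≤ max a (neg a) := by
              rw [← habs_neg a, ← hca]
              exact hBC
            have hk := hK a c b hca hBA
            calc max a (max b c) = max a (max c b) := by rw [max_comm b c]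
              _ = neg (min a (min c b)) := hk
              _ = neg (min a (min b c)) := by rw [min_comm c b]
          · rw [hS a b, if_neg hba, if_pos hAB, hS b c, if_neg hcb, if_pos hBC,
              hS a c, if_neg hca, if_pos (hAB.trans hBC)]
        · rw [hS a b, if_neg hba, if_pos hAB, hS b c, if_neg hcb, if_neg hBC,
            hS a b, if_neg hba, if_pos hAB]
    · -- S a b = a
      by_cases hcb : c = neg b
      · have hCB : max c (neg c) = max b (neg b) := by rw [hcb, habs_neg]
        have hca : c ≠ neg a := by
          intro hc
          apply hAB
          rw [← hCB, hc, habs_neg]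
        rw [hS a b, if_neg hba, if_neg hAB, hS b c, if_pos hcb,
          hS a c, if_neg hca, if_neg (by rw [hCB]; exact hAB), hSz0 a]
      · by_cases hBC : max b (neg b) ≤ max c (neg c)
        · rw [hS a b, if_neg hba, if_neg hAB, hS b c, if_neg hcb, if_pos hBC]
        · have hca : c ≠ neg a := by
            intro hc
            apply hBC
            have : max c (neg c) = max a (neg a) := by rw [hc, habs_neg]
            exact le_trans (not_le.mp hAB).le this.ge
          have hCA : ¬ max a (neg a) ≤ max c (neg c) :=
            not_le.mpr ((not_le.mp hBC).trans (not_le.mp hAB))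
          rw [hS a b, if_neg hba, if_neg hAB, hS b c, if_neg hcb, if_neg hBC,
            hS a c, if_neg hca, if_neg hCA, hS a b, if_neg hba, if_neg hAB]
end

section
/- The symmetric minimum distributes over the symmetric maximum separately on the nonnegative and the nonpositive part: if a, b, c ∈ L are all ≥ 0, or all ≤ 0, then a ⊼ (b ⊻ c) = (a ⊼ b) ⊻ (a ⊼ c) and (b ⊻ c) ⊼ a = (b ⊼ a) ⊻ (c ⊼ a). -/
section
variable {L : Type*} [LinearOrder L]

lemma smNegLe (neg : L → L) (hord : ∀ x y, x ≤ y ↔ neg y ≤ neg x)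
    {x y : L} (h : x ≤ y) : neg y ≤ neg x := (hord x y).1 h

lemma smNegNonpos (neg : L → L) (zero : L) (hord : ∀ x y, x ≤ y ↔ neg y ≤ neg x)
    (hzero : neg zero = zero) {x : L} (hx : zero ≤ x) : neg x ≤ zero := by
  have := smNegLe neg hord hx; rwa [hzero] at this

lemma smNegNonneg (neg : L → L) (zero : L) (hord : ∀ x y, x ≤ y ↔ neg y ≤ neg x)
    (hzero : neg zero = zero) {x : L} (hx : x ≤ zero) : zero ≤ neg x := by
  have := smNegLe neg hord hx; rwa [hzero] at this

lemma smNegInj (neg : L → L) (hinv : ∀ x, neg (neg x) = x)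
    {x y : L} (h : neg x = neg y) : x = y := by
  have := congrArg neg h; rwa [hinv, hinv] at this

lemma smAbsNonneg (neg : L → L) (zero : L) (hord : ∀ x y, x ≤ y ↔ neg y ≤ neg x)
    (hzero : neg zero = zero) {x : L} (hx : zero ≤ x) : max x (neg x) = x :=
  max_eq_left ((smNegNonpos neg zero hord hzero hx).trans hx)

lemma smAbsNonpos (neg : L → L) (zero : L) (hord : ∀ x y, x ≤ y ↔ neg y ≤ neg x)
    (hzero : neg zero = zero) {x : L} (hx : x ≤ zero) : max x (neg x) = neg x :=
  max_eq_right (hx.trans (smNegNonneg neg zero hord hzero hx))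

lemma smNegMax (neg : L → L) (hord : ∀ x y, x ≤ y ↔ neg y ≤ neg x)
    (x y : L) : neg (max x y) = min (neg x) (neg y) := by
  rcases le_total x y with h | h
  · rw [max_eq_right h, min_eq_right (smNegLe neg hord h)]
  · rw [max_eq_left h, min_eq_left (smNegLe neg hord h)]

lemma smNegMin (neg : L → L) (hord : ∀ x y, x ≤ y ↔ neg y ≤ neg x)
    (x y : L) : neg (min x y) = max (neg x) (neg y) := by
  rcases le_total x y with h | h
  · rw [min_eq_left h, max_eq_left (smNegLe neg hord h)]
  · rw [min_eq_right h, max_eq_right (smNegLe neg hord h)]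

lemma symMaxNonneg (neg : L → L) (zero : L) (hinv : ∀ x, neg (neg x) = x)
    (hord : ∀ x y, x ≤ y ↔ neg y ≤ neg x) (hzero : neg zero = zero)
    {b c : L} (hb : zero ≤ b) (hc : zero ≤ c) :
    symMax neg zero b c = max b c := by
  unfold symMax
  rw [smAbsNonneg neg zero hord hzero hb, smAbsNonneg neg zero hord hzero hc]
  by_cases h1 : c = neg b
  · rw [if_pos h1]
    have hnb : neg b ≤ zero := smNegNonpos neg zero hord hzero hb
    have hc0 : c = zero := le_antisymm (h1 ▸ hnb) hc
    have hb0 : b = zero := by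
      apply smNegInj neg hinv
      rw [hzero, ← h1, hc0]
    rw [hb0, hc0, max_self]
  · rw [if_neg h1, if_neg]
    rintro (h2 | h2)
    · have hnb : neg b ≤ zero := smNegNonpos neg zero hord hzero hb
      have h0 : max b c = zero := le_antisymm (h2 ▸ hnb) (le_max_of_le_left hb)
      have hb0 : b = zero := le_antisymm (le_max_left b c |>.trans h0.le) hb
      have hc0 : c = zero := le_antisymm (le_max_right b c |>.trans h0.le) hc
      exact h1 (by rw [hb0, hc0, hzero])
    · have hnc : neg c ≤ zero := smNegNonpos neg zero hord hzero hc
      have h0 : max b c = zero := le_antisymm (h2 ▸ hnc) (le_max_of_le_left hb)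
      have hb0 : b = zero := le_antisymm (le_max_left b c |>.trans h0.le) hb
      have hc0 : c = zero := le_antisymm (le_max_right b c |>.trans h0.le) hc
      exact h1 (by rw [hb0, hc0, hzero])

lemma symMaxNonpos (neg : L → L) (zero : L) (hinv : ∀ x, neg (neg x) = x)
    (hord : ∀ x y, x ≤ y ↔ neg y ≤ neg x) (hzero : neg zero = zero)
    {b c : L} (hb : b ≤ zero) (hc : c ≤ zero) :
    symMax neg zero b c = min b c := by
  unfold symMax
  rw [smAbsNonpos neg zero hord hzero hb, smAbsNonpos neg zero hord hzero hc]
  by_cases h1 : c = neg b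
  · rw [if_pos h1]
    have hnb : zero ≤ neg b := smNegNonneg neg zero hord hzero hb
    have hc0 : c = zero := le_antisymm hc (h1 ▸ hnb)
    have hb0 : b = zero := by
      apply smNegInj neg hinv
      rw [hzero, ← h1, hc0]
    rw [hb0, hc0, min_self]
  · rw [if_neg h1, if_pos]
    · rw [smNegMax neg hord, hinv, hinv]
    · rcases le_total (neg b) (neg c) with h | h
      · right; exact max_eq_right h
      · left; exact max_eq_left h

lemma symMinNonneg (neg : L → L) (zero : L)
    (hord : ∀ x y, x ≤ y ↔ neg y ≤ neg x) (hzero : neg zero = zero)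
    {a b : L} (ha : zero ≤ a) (hb : zero ≤ b) :
    symMin neg zero a b = min a b := by
  unfold symMin
  rw [if_neg, smAbsNonneg neg zero hord hzero ha, smAbsNonneg neg zero hord hzero hb]
  rintro (⟨h1, _⟩ | ⟨h1, _⟩)
  · exact absurd ha h1.not_ge
  · exact absurd hb h1.not_ge

lemma symMinNonpos (neg : L → L) (zero : L)
    (hord : ∀ x y, x ≤ y ↔ neg y ≤ neg x) (hzero : neg zero = zero)
    {a b : L} (ha : a ≤ zero) (hb : b ≤ zero) :
    symMin neg zero a b = min (neg a) (neg b) := by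
  unfold symMin
  rw [if_neg, smAbsNonpos neg zero hord hzero ha, smAbsNonpos neg zero hord hzero hb]
  rintro (⟨_, h2⟩ | ⟨_, h2⟩)
  · exact absurd hb h2.not_ge
  · exact absurd ha h2.not_ge

lemma symMinComm (neg : L → L) (zero : L) (a b : L) :
    symMin neg zero a b = symMin neg zero b a := by
  unfold symMin
  rw [min_comm (max a (neg a))]
  exact if_congr or_comm rfl rfl

end

/-- the symmetric minimum distributes over the symmetric maximum
separately on the nonnegative part and on the nonpositive part of `L`. -/
theorem symMin_distrib_symMax_on_same_sign {L : Type*} [LinearOrder L]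
    (neg : L → L) (zero : L)
    (hinv : ∀ x, neg (neg x) = x)
    (hord : ∀ x y, x ≤ y ↔ neg y ≤ neg x)
    (hzero : neg zero = zero)
    (a b c : L)
    (h : (zero ≤ a ∧ zero ≤ b ∧ zero ≤ c) ∨ (a ≤ zero ∧ b ≤ zero ∧ c ≤ zero)) :
    symMin neg zero a (symMax neg zero b c) =
      symMax neg zero (symMin neg zero a b) (symMin neg zero a c) ∧
    symMin neg zero (symMax neg zero b c) a =
      symMax neg zero (symMin neg zero b a) (symMin neg zero c a) := by
  have key : symMin neg zero a (symMax neg zero b c) =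
      symMax neg zero (symMin neg zero a b) (symMin neg zero a c) := by
    rcases h with ⟨ha, hb, hc⟩ | ⟨ha, hb, hc⟩
    · have hbc : zero ≤ max b c := le_max_of_le_left hb
      have hab : zero ≤ min a b := le_min ha hb
      have hac : zero ≤ min a c := le_min ha hc
      rw [symMaxNonneg neg zero hinv hord hzero hb hc,
        symMinNonneg neg zero hord hzero ha hbc,
        symMinNonneg neg zero hord hzero ha hb,
        symMinNonneg neg zero hord hzero ha hc,
        symMaxNonneg neg zero hinv hord hzero hab hac]
      exact min_max_distrib_left _ _ _
    · have hbc : min b c ≤ zero := min_le_of_left_le hb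
      have hab : zero ≤ min (neg a) (neg b) :=
        le_min (smNegNonneg neg zero hord hzero ha) (smNegNonneg neg zero hord hzero hb)
      have hac : zero ≤ min (neg a) (neg c) :=
        le_min (smNegNonneg neg zero hord hzero ha) (smNegNonneg neg zero hord hzero hc)
      rw [symMaxNonpos neg zero hinv hord hzero hb hc,
        symMinNonpos neg zero hord hzero ha hbc,
        symMinNonpos neg zero hord hzero ha hb,
        symMinNonpos neg zero hord hzero ha hc,
        symMaxNonneg neg zero hinv hord hzero hab hac,
        smNegMin neg hord]
      exact min_max_distrib_left _ _ _
  refine ⟨key, ?_⟩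
  rw [symMinComm neg zero (symMax neg zero b c) a, symMinComm neg zero b a, symMinComm neg zero c a]
  exact key
end

section
/- The symmetric maximum is isotone: for all a, a', b, b' ∈ L, if a ≤ a' and b ≤ b', then a ⊻ b ≤ a' ⊻ b'. -/
theorem symMax_comm {L : Type*} [LinearOrder L] (neg : L → L) (zero : L)
    (hinv : ∀ x, neg (neg x) = x) (a b : L) :
    symMax neg zero a b = symMax neg zero b a := by
  unfold symMax
  by_cases hba : b = neg a
  · have hab : a = neg b := by rw [hba, hinv]
    rw [if_pos hba, if_pos hab]
  · have hab : a ≠ neg b := fun h => hba (by rw [h, hinv])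
    rw [if_neg hba, if_neg hab, max_comm (max a (neg a)) (max b (neg b))]
    exact if_congr or_comm rfl rfl

theorem symMax_eq_left {L : Type*} [LinearOrder L] (neg : L → L) (zero : L)
    (hinv : ∀ x, neg (neg x) = x) (a b : L)
    (hne : b ≠ neg a) (h : max b (neg b) ≤ max a (neg a)) :
    symMax neg zero a b = a := by
  unfold symMax
  rw [if_neg hne, max_eq_left h]
  rcases max_choice a (neg a) with h1 | h1 <;> rw [h1]
  · split_ifs with h2
    · rcases h2 with h2 | h2
      · rw [← h2]
      · exact absurd (by rw [h2, hinv] : b = neg a) hne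
    · rfl
  · split_ifs with h2
    · exact hinv a
    · exact absurd (Or.inl rfl) h2

theorem symMax_eq_right {L : Type*} [LinearOrder L] (neg : L → L) (zero : L)
    (hinv : ∀ x, neg (neg x) = x) (a b : L)
    (hne : b ≠ neg a) (h : max a (neg a) ≤ max b (neg b)) :
    symMax neg zero a b = b := by
  rw [symMax_comm neg zero hinv]
  exact symMax_eq_left neg zero hinv b a (fun hh => hne (by rw [hh, hinv])) h

theorem symMax_key {L : Type*} [LinearOrder L] (neg : L → L) (zero : L)
    (hinv : ∀ x, neg (neg x) = x)
    (hord : ∀ x y, x ≤ y ↔ neg y ≤ neg x)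
    (hzero : neg zero = zero)
    (a a' b b' : L) (ha : a ≤ a') (hb : b ≤ b')
    (hne : b ≠ neg a) (hc : max b (neg b) ≤ max a (neg a)) :
    symMax neg zero a b ≤ symMax neg zero a' b' := by
  have negmono : ∀ x y : L, x ≤ y → neg y ≤ neg x := fun x y h => (hord x y).mp h
  rw [symMax_eq_left neg zero hinv a b hne hc]
  by_cases h2 : b' = neg a'
  · have hs' : symMax neg zero a' b' = zero := by unfold symMax; rw [if_pos h2]
    rw [hs']
    by_contra hcon
    push_neg at hcon
    have h3 : neg a ≤ zero := by
      have := negmono zero a hcon.le; rwa [hzero] at this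
    have h4 : max a (neg a) = a := max_eq_left (h3.trans hcon.le)
    have h5 : neg b ≤ a := le_trans (le_max_right b (neg b)) (h4 ▸ hc)
    have h6 : neg a ≤ b := by
      have := negmono (neg b) a h5; rwa [hinv] at this
    have h7 : neg a' ≤ neg a := negmono a a' ha
    have h8 : b ≤ neg a := le_trans hb (h2 ▸ h7)
    exact hne (le_antisymm h8 h6)
  · rcases le_total (max b' (neg b')) (max a' (neg a')) with hc' | hc'
    · rw [symMax_eq_left neg zero hinv a' b' h2 hc']; exact ha
    · rw [symMax_eq_right neg zero hinv a' b' h2 hc']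
      by_contra hcon
      push_neg at hcon
      have e1 : a ≤ max a' (neg a') := le_trans ha (le_max_left _ _)
      have e2 : a ≤ max b' (neg b') := e1.trans hc'
      have e3 : max b' (neg b') = neg b' := by
        rcases max_choice b' (neg b') with h | h
        · exact absurd (e2.trans h.le) (not_le.mpr hcon)
        · exact h
      have e4 : a ≤ neg b' := e3 ▸ e2
      have e5 : neg b' ≤ neg b := negmono b b' hb
      have e6 : a ≤ neg b := e4.trans e5
      have e7 : neg b ≤ max a (neg a) := le_trans (le_max_right _ _) hc
      rcases max_choice a (neg a) with h | h
      · have heq : neg b = a := le_antisymm (h ▸ e7) e6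
        exact hne (by rw [← heq, hinv])
      · have h9 : neg b ≤ neg a := h ▸ e7
        have h10 : a ≤ b := (hord a b).mpr h9
        exact absurd (lt_of_le_of_lt hb hcon) (not_lt.mpr h10)

theorem symMax_isotone' {L : Type*} [LinearOrder L]
    (neg : L → L) (zero : L)
    (hinv : ∀ x, neg (neg x) = x)
    (hord : ∀ x y, x ≤ y ↔ neg y ≤ neg x)
    (hzero : neg zero = zero)
    (a a' b b' : L) (ha : a ≤ a') (hb : b ≤ b') :
    symMax neg zero a b ≤ symMax neg zero a' b' := by
  have negmono : ∀ x y : L, x ≤ y → neg y ≤ neg x := fun x y h => (hord x y).mp h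
  by_cases h1 : b = neg a
  · have hs : symMax neg zero a b = zero := by unfold symMax; rw [if_pos h1]
    rw [hs]
    by_cases h2 : b' = neg a'
    · have hs' : symMax neg zero a' b' = zero := by unfold symMax; rw [if_pos h2]
      rw [hs']
    · rcases le_total (max b' (neg b')) (max a' (neg a')) with hc' | hc'
      · rw [symMax_eq_left neg zero hinv a' b' h2 hc']
        by_contra hcon
        push_neg at hcon
        have z1 : zero ≤ neg a' := by
          have := negmono a' zero hcon.le; rwa [hzero] at this
        have z2 : neg a' ≤ neg a := negmono a a' ha
        have z3 : neg a' ≤ b := h1 ▸ z2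
        have z4 : neg a' ≤ b' := z3.trans hb
        have z5 : max a' (neg a') ≤ max b' (neg b') :=
          le_trans (max_le (hcon.le.trans z1) le_rfl)
            (le_trans z4 (le_max_left _ _))
        have hs2 : symMax neg zero a' b' = b' :=
          symMax_eq_right neg zero hinv a' b' h2 z5
        have hab : a' = b' := by
          rw [← symMax_eq_left neg zero hinv a' b' h2 hc', hs2]
        exact absurd (hab ▸ z4) (not_le.mpr (lt_of_lt_of_le hcon z1))
      · rw [symMax_eq_right neg zero hinv a' b' h2 hc']
        by_contra hcon
        push_neg at hcon
        have z1 : zero ≤ neg b' := by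
          have := negmono b' zero hcon.le; rwa [hzero] at this
        have z2 : neg b' ≤ neg b := negmono b b' hb
        have z2' : neg b = a := by rw [h1, hinv]
        have z3 : neg b' ≤ a := z2' ▸ z2
        have z4 : neg b' ≤ a' := z3.trans ha
        have z5 : max b' (neg b') ≤ max a' (neg a') :=
          le_trans (max_le (hcon.le.trans z1) le_rfl)
            (le_trans z4 (le_max_left _ _))
        have hs2 : symMax neg zero a' b' = a' :=
          symMax_eq_left neg zero hinv a' b' h2 z5
        have hab : b' = a' := by
          rw [← symMax_eq_right neg zero hinv a' b' h2 hc', hs2]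
        exact absurd (hab ▸ z4) (not_le.mpr (lt_of_lt_of_le hcon z1))
  · rcases le_total (max b (neg b)) (max a (neg a)) with hc | hc
    · exact symMax_key neg zero hinv hord hzero a a' b b' ha hb h1 hc
    · rw [symMax_comm neg zero hinv a b, symMax_comm neg zero hinv a' b']
      exact symMax_key neg zero hinv hord hzero b b' a a' hb ha
        (fun h => h1 (by rw [h, hinv])) hc

/-- the symmetric maximum is isotone. -/
theorem symMax_isotone {L : Type*} [LinearOrder L]
    (neg : L → L) (zero : L)
    (hinv : ∀ x, neg (neg x) = x)
    (hord : ∀ x y, x ≤ y ↔ neg y ≤ neg x)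
    (hzero : neg zero = zero)
    (a a' b b' : L) (ha : a ≤ a') (hb : b ≤ b') :
    symMax neg zero a b ≤ symMax neg zero a' b' := by
  exact symMax_isotone' neg zero hinv hord hzero a a' b b' ha hb
end

section
/- Symmetry and associativity are incompatible: if L contains elements a, b with 0 < a < b, then there exists no binary operation ⊕ on L satisfying simultaneously (C1) x ⊕ y = max(x, y) whenever x ≥ 0 and y ≥ 0, (C2) x ⊕ (−x) = 0 for all x ∈ L, and associativity ((x ⊕ y) ⊕ z = x ⊕ (y ⊕ z) for all x, y, z). -/
/-- if `L` contains `a, b` with `zero < a < b`, there is no binary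
operation on `L` satisfying (C1), (C2) and associativity simultaneously. -/
theorem no_symmetric_associative_extension {L : Type*} [LinearOrder L]
    (neg : L → L) (zero : L)
    (hinv : ∀ x, neg (neg x) = x)
    (hord : ∀ x y, x ≤ y ↔ neg y ≤ neg x)
    (hzero : neg zero = zero)
    (a b : L) (ha : zero < a) (hab : a < b) :
    ¬ ∃ op : L → L → L,
        (∀ x y, zero ≤ x → zero ≤ y → op x y = max x y) ∧
        (∀ x, op x (neg x) = zero) ∧
        (∀ x y z, op (op x y) z = op x (op y z)) := by
  rintro ⟨op, hc1, hc2, hassoc⟩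
  have hb : zero ≤ b := (ha.trans hab).le
  have h1 : op (op a b) (neg b) = zero := by
    rw [hc1 a b ha.le hb, max_eq_right hab.le, hc2]
  have h2 : op a (op b (neg b)) = a := by
    rw [hc2, hc1 a zero ha.le le_rfl, max_eq_left ha.le]
  have := hassoc a b (neg b)
  rw [h1, h2] at this
  exact absurd this.symm ha.ne'
end

section
/- Let ⊕ be a commutative binary operation on L satisfying (C1) x ⊕ y = max(x, y) whenever x ≥ 0 and y ≥ 0, and (C3+) −(x ⊕ y) = (−x) ⊕ (−y) for all x, y ≥ 0. Then: (a) 0 is a neutral element of ⊕ (x ⊕ 0 = x for all x ∈ L); (b) if moreover ⊕ is associative, then |a ⊕ (−a)| ≥ |a| for every a ∈ L; (c) if moreover ⊕ is associative and isotone in each argument, then |a ⊕ (−a)| = |a| for every a ∈ L. -/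
/-- for a commutative operation satisfying (C1) and (C3+):
(a) `zero` is neutral; (b) associativity forces `|a ⊕ (−a)| ≥ |a|`;
(c) associativity together with isotonicity in each argument forces
`|a ⊕ (−a)| = |a|`.  Here `|x| = max x (neg x)`. -/
theorem neutral_and_symmetric_defect {L : Type*} [LinearOrder L]
    (neg : L → L) (zero : L)
    (hinv : ∀ x, neg (neg x) = x)
    (hord : ∀ x y, x ≤ y ↔ neg y ≤ neg x)
    (hzero : neg zero = zero)
    (op : L → L → L)
    (hcomm : ∀ x y, op x y = op y x)
    (hC1 : ∀ x y, zero ≤ x → zero ≤ y → op x y = max x y)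
    (hC3p : ∀ x y, zero ≤ x → zero ≤ y → neg (op x y) = op (neg x) (neg y)) :
    (∀ x, op x zero = x) ∧
    ((∀ x y z, op (op x y) z = op x (op y z)) →
      (∀ a, max a (neg a) ≤ max (op a (neg a)) (neg (op a (neg a)))) ∧
      (((∀ x x' y, x ≤ x' → op x y ≤ op x' y) ∧
        (∀ x y y', y ≤ y' → op x y ≤ op x y')) →
        ∀ a, max (op a (neg a)) (neg (op a (neg a))) = max a (neg a))) := by

  -- negation facts
  have hneg_nonneg : ∀ x, zero ≤ x → neg x ≤ zero := by
    intro x hx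
    have := (hord zero x).mp hx
    rwa [hzero] at this
  have hnonneg_of_neg : ∀ x, x ≤ zero → zero ≤ neg x := by
    intro x hx
    have := (hord x zero).mp hx
    rwa [hzero] at this
  constructor
  · -- neutrality
    intro x
    rcases le_or_gt zero x with hx | hx
    · rw [hC1 x zero hx le_rfl, max_eq_left hx]
    · have hnx : zero ≤ neg x := hnonneg_of_neg x hx.le
      have h := hC3p (neg x) zero hnx le_rfl
      rw [hinv, hzero] at h
      rw [hC1 (neg x) zero hnx le_rfl, max_eq_left hnx] at h
      · rw [← h, hinv]
  · intro hassoc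
    -- key lemma for nonnegative a
    have key : ∀ a, zero ≤ a → a ≤ max (op a (neg a)) (neg (op a (neg a))) := by
      intro a ha
      have haa : op a a = a := by rw [hC1 a a ha ha, max_self]
      have hnana : op (neg a) (neg a) = neg a := by
        have h := hC3p a a ha ha
        rw [haa] at h
        exact h.symm
      set b := op a (neg a) with hb
      have hab : op a b = b := by
        rw [hb, ← hassoc, haa]
      have hnab : op (neg a) b = b := by
        rw [hb, ← hassoc, hcomm (neg a) a, hassoc, hnana]
      rcases le_or_gt zero b with hbpos | hbneg
      · have h3 : a ≤ b := by
          have : b = max a b := by rw [← hC1 a b ha hbpos, hab]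
          rw [this]; exact le_max_left a b
        exact h3.trans (le_max_left b (neg b))
      · have hnb : zero ≤ neg b := hnonneg_of_neg b hbneg.le
        have h := hC3p a (neg b) ha hnb
        rw [hinv, hnab] at h
        have h2 : op a (neg b) = neg b := by
          have := congrArg neg h
          rwa [hinv] at this
        rw [hC1 a (neg b) ha hnb] at h2
        have : a ≤ neg b := le_of_max_le_left (le_of_eq h2)
        exact le_trans this (le_max_right b (neg b))
    have main_ge : ∀ a, max a (neg a) ≤ max (op a (neg a)) (neg (op a (neg a))) := by
      intro a
      rcases le_or_gt zero a with ha | ha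
      · have h1 := key a ha
        have h2 : neg a ≤ a := le_trans (hneg_nonneg a ha) ha
        exact max_le h1 (le_trans h2 h1)
      · have hna : zero ≤ neg a := hnonneg_of_neg a ha.le
        have h1 := key (neg a) hna
        have heq : op (neg a) (neg (neg a)) = op a (neg a) := by
          rw [hinv, hcomm]
        rw [heq] at h1
        have h2 : a ≤ neg a := le_trans ha.le hna
        exact max_le (le_trans h2 h1) h1
    refine ⟨main_ge, ?_⟩
    rintro ⟨hmonoL, hmonoR⟩ a
    have keyle : ∀ a, zero ≤ a → max (op a (neg a)) (neg (op a (neg a))) ≤ a := by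
      intro a ha
      have haa : op a a = a := by rw [hC1 a a ha ha, max_self]
      have hnana : op (neg a) (neg a) = neg a := by
        have h := hC3p a a ha ha
        rw [haa] at h
        exact h.symm
      have hna_le : neg a ≤ a := le_trans (hneg_nonneg a ha) ha
      have hb_le : op a (neg a) ≤ a := by
        calc op a (neg a) ≤ op a a := hmonoR a (neg a) a hna_le
        _ = a := haa
      have hb_ge : neg a ≤ op a (neg a) := by
        calc neg a = op (neg a) (neg a) := hnana.symm
        _ ≤ op a (neg a) := hmonoL (neg a) a (neg a) hna_le
      have hnb_le : neg (op a (neg a)) ≤ a := by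
        have := (hord (neg a) (op a (neg a))).mp hb_ge
        rwa [hinv] at this
      exact max_le hb_le hnb_le
    rcases le_or_gt zero a with ha | ha
    · exact le_antisymm ((keyle a ha).trans (le_max_left a (neg a))) (main_ge a)
    · have hna : zero ≤ neg a := hnonneg_of_neg a ha.le
      have h1 := keyle (neg a) hna
      have heq : op (neg a) (neg (neg a)) = op a (neg a) := by
        rw [hinv, hcomm]
      rw [heq] at h1
      exact le_antisymm (h1.trans (le_max_right a (neg a))) (main_ge a)
end

section
/- For every nonempty finite multiset s over L, the splitting-rule evaluation lies between the minimum and the maximum of the terms: min(s) ≤ ⟨⊻ s⟩₋⁺ ≤ max(s). -/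
section Aux

variable {L : Type*} [LinearOrder L]

lemma zero_le_foldmax (zero : L) (t : Multiset L) : zero ≤ t.fold max zero := by
  induction t using Multiset.induction with
  | empty => simp
  | cons a t ih => rw [Multiset.fold_cons_left]; exact le_max_of_le_right ih

lemma le_foldmax (zero : L) (t : Multiset L) : ∀ x ∈ t, x ≤ t.fold max zero := by
  induction t using Multiset.induction with
  | empty => simp
  | cons a t ih =>
    intro x hx
    rw [Multiset.fold_cons_left]
    rcases Multiset.mem_cons.mp hx with h | h
    · exact h ▸ le_max_left _ _
    · exact le_max_of_le_right (ih x h)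

lemma foldmax_mem (zero : L) (t : Multiset L) :
    t.fold max zero = zero ∨ t.fold max zero ∈ t := by
  induction t using Multiset.induction with
  | empty => simp
  | cons a t ih =>
    rw [Multiset.fold_cons_left]
    rcases max_cases a (t.fold max zero) with ⟨h, _⟩ | ⟨h, _⟩
    · rw [h]; exact Or.inr (Multiset.mem_cons_self a t)
    · rw [h]
      rcases ih with h' | h'
      · exact Or.inl h'
      · exact Or.inr (Multiset.mem_cons_of_mem h')

lemma foldmin_le_zero (zero : L) (t : Multiset L) : t.fold min zero ≤ zero := by
  induction t using Multiset.induction with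
  | empty => simp
  | cons a t ih => rw [Multiset.fold_cons_left]; exact min_le_of_right_le ih

lemma foldmin_le (zero : L) (t : Multiset L) : ∀ x ∈ t, t.fold min zero ≤ x := by
  induction t using Multiset.induction with
  | empty => simp
  | cons a t ih =>
    intro x hx
    rw [Multiset.fold_cons_left]
    rcases Multiset.mem_cons.mp hx with h | h
    · exact h ▸ min_le_left _ _
    · exact min_le_of_right_le (ih x h)

lemma foldmin_mem (zero : L) (t : Multiset L) :
    t.fold min zero = zero ∨ t.fold min zero ∈ t := by
  induction t using Multiset.induction with
  | empty => simp
  | cons a t ih =>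
    rw [Multiset.fold_cons_left]
    rcases min_cases a (t.fold min zero) with ⟨h, _⟩ | ⟨h, _⟩
    · rw [h]; exact Or.inr (Multiset.mem_cons_self a t)
    · rw [h]
      rcases ih with h' | h'
      · exact Or.inl h'
      · exact Or.inr (Multiset.mem_cons_of_mem h')

end Aux

/-- for a nonempty finite multiset, the splitting-rule evaluation
lies between the minimum and the maximum of the terms. -/
theorem splitEval_between_min_and_max {L : Type*} [LinearOrder L]
    (neg : L → L) (zero : L)
    (hinv : ∀ x, neg (neg x) = x)
    (hord : ∀ x y, x ≤ y ↔ neg y ≤ neg x)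
    (hzero : neg zero = zero)
    (s : Multiset L) (hs : s ≠ 0)
    (mn mx : L)
    (hmn : mn ∈ s) (hmn' : ∀ x ∈ s, mn ≤ x)
    (hmx : mx ∈ s) (hmx' : ∀ x ∈ s, x ≤ mx) :
    mn ≤ splitEval neg zero s ∧ splitEval neg zero s ≤ mx := by
  classical
  set P := ((s.filter (fun x => zero ≤ x)).fold max zero) with hPdef
  set Q := ((s.filter (fun x => x < zero)).fold min zero) with hQdef
  have hP0 : zero ≤ P := zero_le_foldmax zero _
  have hQ0 : Q ≤ zero := foldmin_le_zero zero _
  have hPub : ∀ x ∈ s, zero ≤ x → x ≤ P := fun x hx h0 =>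
    le_foldmax zero _ x (Multiset.mem_filter.mpr ⟨hx, h0⟩)
  have hQlb : ∀ x ∈ s, x < zero → Q ≤ x := fun x hx h0 =>
    foldmin_le zero _ x (Multiset.mem_filter.mpr ⟨hx, h0⟩)
  have hPmem : P = zero ∨ P ∈ s := by
    rcases foldmax_mem zero (s.filter (fun x => zero ≤ x)) with h | h
    · exact Or.inl h
    · exact Or.inr (Multiset.mem_of_mem_filter h)
  have hQmem : Q = zero ∨ (Q ∈ s ∧ Q < zero) := by
    rcases foldmin_mem zero (s.filter (fun x => x < zero)) with h | h
    · exact Or.inl h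
    · exact Or.inr ⟨Multiset.mem_of_mem_filter h, (Multiset.mem_filter.mp h).2⟩
  -- negation facts
  have hnegP : neg P ≤ zero := by
    have := (hord zero P).mp hP0
    rwa [hzero] at this
  have hnegQ : zero ≤ neg Q := by
    have := (hord Q zero).mp hQ0
    rwa [hzero] at this
  have hmaxP : max P (neg P) = P := max_eq_left (hnegP.trans hP0)
  have hmaxQ : max Q (neg Q) = neg Q := max_eq_right (hQ0.trans hnegQ)
  rw [splitEval, ← hPdef, ← hQdef, symMax, hmaxP, hmaxQ]
  split_ifs with h1 h2
  · -- Q = neg P : result is zero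
    constructor
    · -- mn ≤ zero
      by_contra hc
      push_neg at hc
      have hQz : Q = zero := by
        rcases hQmem with h | ⟨hmem, hlt⟩
        · exact h
        · exact absurd (lt_of_le_of_lt (hmn' Q hmem) hlt) (not_lt.mpr hc.le)
      have hPz : P = zero := by
        have : neg P = zero := hQz ▸ h1.symm
        calc P = neg (neg P) := (hinv P).symm
        _ = neg zero := by rw [this]
        _ = zero := hzero
      have := hPub mn hmn hc.le
      exact absurd (this.trans_eq hPz) (not_le.mpr hc)
    · -- zero ≤ mx
      by_contra hc
      push_neg at hc
      have hPz : P = zero := by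
        rcases hPmem with h | h
        · exact h
        · exact absurd (lt_of_le_of_lt (hmx' P h) hc) (not_lt.mpr hP0)
      have hQz : Q = zero := by rw [h1, hPz, hzero]
      have := hQlb mx hmx hc
      exact absurd (hQz ▸ this) (not_le.mpr hc)
  · -- condition case: result is neg (max P (neg Q))
    -- first rule out max P (neg Q) = neg P
    have hMQ : max P (neg Q) = neg Q := by
      rcases h2 with h | h
      · exfalso
        have hPM : P ≤ max P (neg Q) := le_max_left _ _
        have hPz : P = zero := le_antisymm (h ▸ hPM |>.trans hnegP) hP0
        have hMz : max P (neg Q) = zero := by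
          rw [h, hPz, hzero]
        have hnQz : neg Q ≤ zero := hMz ▸ le_max_right P (neg Q)
        have hQz : zero ≤ Q := by
          have := (hord (neg Q) zero).mp hnQz
          rwa [hzero, hinv] at this
        exact h1 (by rw [le_antisymm hQ0 hQz, hPz, hzero])
      · exact h
    rw [hMQ, hinv]
    constructor
    · -- mn ≤ Q
      rcases hQmem with h | ⟨hmem, _⟩
      · exfalso
        have hnQz : neg Q = zero := by rw [h, hzero]
        have hPz : P = zero := le_antisymm (by
          have := le_max_left P (neg Q)
          rwa [hMQ, hnQz] at this) hP0
        exact h1 (by rw [h, hPz, hzero])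
      · exact hmn' Q hmem
    · -- Q ≤ mx
      rcases le_or_gt zero mx with h | h
      · exact hQ0.trans h
      · exact hQlb mx hmx h
  · -- no condition: result is max P (neg Q)
    push_neg at h2
    have hMP : max P (neg Q) = P := by
      rcases max_cases P (neg Q) with ⟨h, _⟩ | ⟨h, _⟩
      · exact h
      · exact absurd h h2.2
    rw [hMP]
    have hPpos : P ∈ s := by
      rcases hPmem with h | h
      · exfalso
        have hnQz : neg Q ≤ zero := by
          have := le_max_right P (neg Q)
          rwa [hMP, h] at this
        have hQz : zero ≤ Q := by
          have := (hord (neg Q) zero).mp hnQz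
          rwa [hzero, hinv] at this
        have hQz' : Q = zero := le_antisymm hQ0 hQz
        exact h2.2 (by rw [hMP, h, hQz', hzero])
      · exact h
    constructor
    · rcases le_or_gt zero mn with h | h
      · exact hPub mn hmn h
      · exact h.le.trans hP0
    · exact hmx' P hPpos
end

section
/- The splitting rule is isotone: for any finite index set I and families a, a' : I → L with a(i) ≤ a'(i) for every i ∈ I, one has ⟨⊻ {a(i) : i ∈ I}⟩₋⁺ ≤ ⟨⊻ {a'(i) : i ∈ I}⟩₋⁺ (multisets of values). -/
section Aux
variable {L : Type*} [LinearOrder L] (neg : L → L) (zero : L)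

lemma fold_max_nonneg (s : Multiset L) : zero ≤ s.fold max zero := by
  induction s using Multiset.induction_on with
  | empty => simp
  | cons a s ih =>
    rw [Multiset.fold_cons_left]
    exact le_max_of_le_right ih

lemma fold_min_nonpos (s : Multiset L) : s.fold min zero ≤ zero := by
  induction s using Multiset.induction_on with
  | empty => simp
  | cons a s ih =>
    rw [Multiset.fold_cons_left]
    exact min_le_of_right_le ih

lemma fold_max_filter (s : Multiset L) :
    (s.filter (fun x => zero ≤ x)).fold max zero
      = (s.map (fun x => max x zero)).fold max zero := by
  induction s using Multiset.induction_on with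
  | empty => simp
  | cons a s ih =>
    by_cases h : zero ≤ a
    · rw [Multiset.filter_cons_of_pos _ h, Multiset.map_cons,
        Multiset.fold_cons_left, Multiset.fold_cons_left, ih, max_eq_left h]
    · rw [Multiset.filter_cons_of_neg _ h, Multiset.map_cons,
        Multiset.fold_cons_left, ih, max_eq_right (le_of_not_ge h),
        max_eq_right (fold_max_nonneg zero _)]

lemma fold_min_filter (s : Multiset L) :
    (s.filter (fun x => x < zero)).fold min zero
      = (s.map (fun x => min x zero)).fold min zero := by
  induction s using Multiset.induction_on with
  | empty => simp
  | cons a s ih =>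
    by_cases h : a < zero
    · rw [Multiset.filter_cons_of_pos (p := fun x => x < zero) _ h, Multiset.map_cons,
        Multiset.fold_cons_left, Multiset.fold_cons_left, ih, min_eq_left h.le]
    · rw [Multiset.filter_cons_of_neg (p := fun x => x < zero) _ h, Multiset.map_cons,
        Multiset.fold_cons_left, ih, min_eq_right (le_of_not_gt h),
        min_eq_right (fold_min_nonpos zero _)]

lemma fold_max_map_mono {ι : Type*} (s : Multiset ι) (f g : ι → L)
    (h : ∀ i, f i ≤ g i) : (s.map f).fold max zero ≤ (s.map g).fold max zero := by
  induction s using Multiset.induction_on with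
  | empty => simp
  | cons a s ih =>
    rw [Multiset.map_cons, Multiset.map_cons, Multiset.fold_cons_left,
      Multiset.fold_cons_left]
    exact max_le_max (h a) ih

lemma fold_min_map_mono {ι : Type*} (s : Multiset ι) (f g : ι → L)
    (h : ∀ i, f i ≤ g i) : (s.map f).fold min zero ≤ (s.map g).fold min zero := by
  induction s using Multiset.induction_on with
  | empty => simp
  | cons a s ih =>
    rw [Multiset.map_cons, Multiset.map_cons, Multiset.fold_cons_left,
      Multiset.fold_cons_left]
    exact min_le_min (h a) ih

lemma symMax_char (hinv : ∀ x, neg (neg x) = x)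
    (hord : ∀ x y, x ≤ y ↔ neg y ≤ neg x) (hzero : neg zero = zero)
    {p q : L} (hp : zero ≤ p) (hq : q ≤ zero) :
    symMax neg zero p q = if neg q ≤ p then (if p ≤ neg q then zero else p) else q := by
  have hnp : neg p ≤ zero := by have := (hord zero p).mp hp; rwa [hzero] at this
  have hnq : zero ≤ neg q := by have := (hord q zero).mp hq; rwa [hzero] at this
  unfold symMax
  rw [max_eq_left (hnp.trans hp), max_eq_right (hq.trans hnq)]
  rcases lt_trichotomy (neg q) p with hlt | heq | hgt
  · have hne : q ≠ neg p := by
      intro e; rw [e, hinv] at hlt; exact lt_irrefl _ hlt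
    have h1 : p ≠ neg p := by
      intro e
      have hp0 : p = zero := le_antisymm (e ▸ hnp) hp
      rw [hp0] at hlt; exact absurd hlt (not_lt.mpr hnq)
    have h2 : max p (neg q) ≠ neg q := by
      rw [max_eq_left hlt.le]; exact ne_of_gt hlt
    rw [if_neg hne, max_eq_left hlt.le,
      if_neg (by push_neg; exact ⟨h1, by rwa [max_eq_left hlt.le] at h2⟩),
      if_pos hlt.le, if_neg (not_le.mpr hlt)]
  · have hqe : q = neg p := by rw [← heq, hinv]
    rw [if_pos hqe, if_pos (le_of_eq heq), if_pos (le_of_eq heq.symm)]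
  · have hne : q ≠ neg p := by
      intro e; rw [e, hinv] at hgt; exact lt_irrefl _ hgt
    rw [if_neg hne, max_eq_right hgt.le, if_pos (Or.inr rfl), hinv,
      if_neg (not_le.mpr hgt)]

lemma symMax_mono (hinv : ∀ x, neg (neg x) = x)
    (hord : ∀ x y, x ≤ y ↔ neg y ≤ neg x) (hzero : neg zero = zero)
    {p q p' q' : L} (hp : zero ≤ p) (hq : q ≤ zero) (hp' : zero ≤ p') (hq' : q' ≤ zero)
    (hpp : p ≤ p') (hqq : q ≤ q') :
    symMax neg zero p q ≤ symMax neg zero p' q' := by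
  have hnq : neg q' ≤ neg q := (hord q q').mp hqq
  rw [symMax_char neg zero hinv hord hzero hp hq,
    symMax_char neg zero hinv hord hzero hp' hq']
  split_ifs with h1 h2 h3 h4 h3 h4 h3 h4
  · exact le_refl _
  · exact hp'
  · exact absurd ((hnq.trans h1).trans hpp) (not_le.mpr (not_le.mp h3))
  · exact absurd ((hpp.trans h4).trans hnq) h2
  · exact hpp
  · exact absurd ((hnq.trans h1).trans hpp) (not_le.mpr (not_le.mp h3))
  · exact hq
  · exact hq.trans hp'
  · exact hqq

end Aux

/-- the splitting rule is isotone. -/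
theorem splitEval_isotone {L : Type*} [LinearOrder L]
    (neg : L → L) (zero : L)
    (hinv : ∀ x, neg (neg x) = x)
    (hord : ∀ x y, x ≤ y ↔ neg y ≤ neg x)
    (hzero : neg zero = zero)
    {I : Type*} [Fintype I]
    (a a' : I → L) (h : ∀ i, a i ≤ a' i) :
    splitEval neg zero (Finset.univ.val.map a) ≤
      splitEval neg zero (Finset.univ.val.map a') := by
  unfold splitEval
  apply symMax_mono neg zero hinv hord hzero
  · exact fold_max_nonneg zero _
  · exact fold_min_nonpos zero _
  · exact fold_max_nonneg zero _
  · exact fold_min_nonpos zero _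
  · rw [fold_max_filter, fold_max_filter, Multiset.map_map, Multiset.map_map]
    exact fold_max_map_mono zero _ _ _ (fun i => max_le_max (h i) le_rfl)
  · rw [fold_min_filter, fold_min_filter, Multiset.map_map, Multiset.map_map]
    exact fold_min_map_mono zero _ _ _ (fun i => min_le_min (h i) le_rfl)
end

section
/- Adding terms cannot decrease the absolute value of a splitting-rule evaluation, except by cancellation to 0: for all finite multisets s and t over L, either ⟨⊻ (s + t)⟩₋⁺ = 0 or |⟨⊻ (s + t)⟩₋⁺| ≥ |⟨⊻ s⟩₋⁺|. -/
section Aux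

variable {L : Type*} [LinearOrder L] (neg : L → L) (zero : L)

lemma aux_nonneg_fold (s : Multiset L) :
    zero ≤ (s.filter (fun x => zero ≤ x)).fold max zero := by
  induction s using Multiset.induction with
  | empty => simp
  | cons a s ih =>
    rw [Multiset.filter_cons]
    by_cases h : zero ≤ a
    · rw [if_pos h, Multiset.singleton_add, Multiset.fold_cons_left]
      exact le_trans ih (le_max_right _ _)
    · rw [if_neg h]; simpa using ih

lemma aux_nonpos_fold (s : Multiset L) :
    (s.filter (fun x => x < zero)).fold min zero ≤ zero := by
  induction s using Multiset.induction with
  | empty => simp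
  | cons a s ih =>
    rw [Multiset.filter_cons]
    by_cases h : a < zero
    · rw [if_pos h, Multiset.singleton_add, Multiset.fold_cons_left]
      exact le_trans (min_le_right _ _) ih
    · rw [if_neg h]; simpa using ih

variable (hinv : ∀ x, neg (neg x) = x)
    (hord : ∀ x y, x ≤ y ↔ neg y ≤ neg x)
    (hzero : neg zero = zero)

include hinv hord hzero

omit hinv hzero in
lemma aux_neg_min (a b : L) : neg (min a b) = max (neg a) (neg b) := by
  rcases le_total a b with h | h
  · rw [min_eq_left h, max_eq_left ((hord a b).mp h)]
  · rw [min_eq_right h, max_eq_right ((hord b a).mp h)]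

lemma aux_symMax_abs (p q : L) (hp : zero ≤ p) (hq : q ≤ zero) :
    max (symMax neg zero p q) (neg (symMax neg zero p q)) ≤ max p (neg q) ∧
      (symMax neg zero p q = zero ∨
        max (symMax neg zero p q) (neg (symMax neg zero p q)) = max p (neg q)) := by
  have hnp : neg p ≤ zero := by have := (hord zero p).mp hp; rwa [hzero] at this
  have hnq : zero ≤ neg q := by have := (hord q zero).mp hq; rwa [hzero] at this
  have habsp : max p (neg p) = p := max_eq_left (hnp.trans hp)
  have habsq : max q (neg q) = neg q := max_eq_right (hq.trans hnq)
  have hM : zero ≤ max p (neg q) := le_trans hp (le_max_left _ _)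
  have hnM : neg (max p (neg q)) ≤ zero := by
    have := (hord zero (max p (neg q))).mp hM; rwa [hzero] at this
  unfold symMax
  rw [habsp, habsq]
  by_cases h1 : q = neg p
  · rw [if_pos h1, hzero, max_self]
    refine ⟨hM, Or.inl rfl⟩
  · rw [if_neg h1]
    by_cases h2 : max p (neg q) = neg p ∨ max p (neg q) = neg q
    · rw [if_pos h2]
      have : max (neg (max p (neg q))) (neg (neg (max p (neg q)))) = max p (neg q) := by
        rw [hinv]; exact max_eq_right (hnM.trans hM)
      exact ⟨le_of_eq this, Or.inr this⟩
    · rw [if_neg h2]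
      have : max (max p (neg q)) (neg (max p (neg q))) = max p (neg q) :=
        max_eq_left (hnM.trans hM)
      exact ⟨le_of_eq this, Or.inr this⟩

end Aux

/-- adding terms cannot decrease the absolute value of a
splitting-rule evaluation, except by cancellation to `zero`.
Here `|x| = max x (neg x)`. -/
theorem splitEval_add_not_smaller {L : Type*} [LinearOrder L]
    (neg : L → L) (zero : L)
    (hinv : ∀ x, neg (neg x) = x)
    (hord : ∀ x y, x ≤ y ↔ neg y ≤ neg x)
    (hzero : neg zero = zero)
    (s t : Multiset L) :
    splitEval neg zero (s + t) = zero ∨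
      max (splitEval neg zero s) (neg (splitEval neg zero s)) ≤
        max (splitEval neg zero (s + t)) (neg (splitEval neg zero (s + t))) := by
  set p := (s.filter (fun x => zero ≤ x)).fold max zero with hpdef
  set q := (s.filter (fun x => x < zero)).fold min zero with hqdef
  set p' := ((s + t).filter (fun x => zero ≤ x)).fold max zero with hp'def
  set q' := ((s + t).filter (fun x => x < zero)).fold min zero with hq'def
  have hp : zero ≤ p := aux_nonneg_fold zero s
  have hq : q ≤ zero := aux_nonpos_fold zero s
  have hp' : zero ≤ p' := aux_nonneg_fold zero (s + t)
  have hq' : q' ≤ zero := aux_nonpos_fold zero (s + t)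
  have hpp' : p ≤ p' := by
    have h := Multiset.fold_add (op := max) zero zero
      (s.filter (fun x => zero ≤ x)) (t.filter (fun x => zero ≤ x))
    rw [max_self] at h
    rw [hp'def, Multiset.filter_add, h]
    exact le_max_left _ _
  have hqq' : q' ≤ q := by
    have h := Multiset.fold_add (op := min) zero zero
      (s.filter (fun x => x < zero)) (t.filter (fun x => x < zero))
    rw [min_self] at h
    rw [hq'def, Multiset.filter_add, h]
    exact min_le_left _ _
  have hM : max p (neg q) ≤ max p' (neg q') :=
    max_le_max hpp' ((hord q' q).mp hqq')
  obtain ⟨h1, _⟩ := aux_symMax_abs neg zero hinv hord hzero p q hp hq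
  obtain ⟨_, h2⟩ := aux_symMax_abs neg zero hinv hord hzero p' q' hp' hq'
  rcases h2 with h2 | h2
  · exact Or.inl h2
  · right
    show max (symMax neg zero p q) (neg (symMax neg zero p q)) ≤
      max (symMax neg zero p' q') (neg (symMax neg zero p' q'))
    rw [h2]
    exact h1.trans hM
end

section
/- Necessary condition for solvability of the inversion equation under the splitting rule: let X be a poset in which every principal ideal {y : y ≤ x} is finite, and let f, g : X → L satisfy g(x) = ⟨⊻ {f(y) : y ≤ x}⟩₋⁺ for every x ∈ X. Then for every x ∈ X, either g(x) = 0 or |g(y)| ≤ |g(x)| for every y with y ⋖ x. -/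
section Aux

variable {L : Type*} [LinearOrder L]

lemma myFoldMaxNonneg (zero : L) (s : Multiset L) : zero ≤ s.fold max zero := by
  induction s using Multiset.induction_on with
  | empty => simp
  | cons a s ih =>
    rw [Multiset.fold_cons_left]
    exact le_max_of_le_right ih

lemma myFoldMinNonpos (zero : L) (s : Multiset L) : s.fold min zero ≤ zero := by
  induction s using Multiset.induction_on with
  | empty => simp
  | cons a s ih =>
    rw [Multiset.fold_cons_left]
    exact min_le_of_right_le ih

lemma myFoldMaxMono (zero : L) {s t : Multiset L} (h : s ≤ t) :
    s.fold max zero ≤ t.fold max zero := by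
  obtain ⟨u, rfl⟩ := Multiset.le_iff_exists_add.1 h
  have := Multiset.fold_add (op := max) zero zero s u
  rw [max_self] at this
  rw [this]
  exact le_max_left _ _

lemma myFoldMinMono (zero : L) {s t : Multiset L} (h : s ≤ t) :
    t.fold min zero ≤ s.fold min zero := by
  obtain ⟨u, rfl⟩ := Multiset.le_iff_exists_add.1 h
  have := Multiset.fold_add (op := min) zero zero s u
  rw [min_self] at this
  rw [this]
  exact min_le_left _ _

lemma myAbsSymMax (neg : L → L) (zero : L)
    (hinv : ∀ x, neg (neg x) = x)
    (hord : ∀ x y, x ≤ y ↔ neg y ≤ neg x)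
    (hzero : neg zero = zero)
    {p q : L} (hp : zero ≤ p) (hq : q ≤ zero) :
    symMax neg zero p q = zero ∨
      max (symMax neg zero p q) (neg (symMax neg zero p q)) = max p (neg q) := by
  have hnegle : ∀ a b : L, a ≤ b → neg b ≤ neg a := fun a b h => (hord a b).1 h
  have hnp : neg p ≤ zero := by
    have := hnegle zero p hp; rwa [hzero] at this
  have hnq : zero ≤ neg q := by
    have := hnegle q zero hq; rwa [hzero] at this
  have habsp : max p (neg p) = p := max_eq_left (hnp.trans hp)
  have habsq : max q (neg q) = neg q := max_eq_right (hq.trans hnq)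
  have hM0 : zero ≤ max p (neg q) := le_trans hp (le_max_left _ _)
  have hnM : neg (max p (neg q)) ≤ max p (neg q) := by
    have := hnegle zero _ hM0; rw [hzero] at this
    exact this.trans hM0
  unfold symMax
  rw [habsp, habsq]
  split
  · exact Or.inl rfl
  · right
    split
    · rw [hinv]
      exact max_eq_right hnM
    · exact max_eq_left hnM

end Aux

/-- if `g (x) = ⟨⊻_{y ≤ x} f (y)⟩₋⁺` on a poset whose principal
ideals are finite, then at each `x`, either `g x = zero` or
`|g y| ≤ |g x|` for every `y` covered by `x`.  Here `|x| = max x (neg x)`. -/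
theorem splitEval_inversion_necessary_condition {L : Type*} [LinearOrder L]
    (neg : L → L) (zero : L)
    (hinv : ∀ x, neg (neg x) = x)
    (hord : ∀ x y, x ≤ y ↔ neg y ≤ neg x)
    (hzero : neg zero = zero)
    {X : Type*} [PartialOrder X]
    (hfin : ∀ x : X, {y | y ≤ x}.Finite)
    (f g : X → L)
    (hg : ∀ x, g x = splitEval neg zero ((hfin x).toFinset.val.map f)) :
    ∀ x : X, g x = zero ∨
      ∀ y, y ⋖ x → max (g y) (neg (g y)) ≤ max (g x) (neg (g x)) := by
  have hnegle : ∀ a b : L, a ≤ b → neg b ≤ neg a := fun a b h => (hord a b).1 h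
  -- abbreviations
  set P : X → L := fun z =>
    (((hfin z).toFinset.val.map f).filter (fun x => zero ≤ x)).fold max zero with hP
  set Q : X → L := fun z =>
    (((hfin z).toFinset.val.map f).filter (fun x => x < zero)).fold min zero with hQ
  have hgPQ : ∀ z, g z = symMax neg zero (P z) (Q z) := fun z => hg z
  have hPz : ∀ z, zero ≤ P z := fun z => myFoldMaxNonneg zero _
  have hQz : ∀ z, Q z ≤ zero := fun z => myFoldMinNonpos zero _
  have habs : ∀ z, g z = zero ∨
      max (g z) (neg (g z)) = max (P z) (neg (Q z)) := by
    intro z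
    rw [hgPQ z]
    exact myAbsSymMax neg zero hinv hord hzero (hPz z) (hQz z)
  have hmono : ∀ y x : X, y ≤ x →
      P y ≤ P x ∧ neg (Q y) ≤ neg (Q x) := by
    intro y x hyx
    have hsub : (hfin y).toFinset ⊆ (hfin x).toFinset := by
      intro z hz
      simp only [Set.Finite.mem_toFinset, Set.mem_setOf_eq] at hz ⊢
      exact hz.trans hyx
    have hval : (hfin y).toFinset.val ≤ (hfin x).toFinset.val :=
      Finset.val_le_iff.2 hsub
    have hmap : (hfin y).toFinset.val.map f ≤ (hfin x).toFinset.val.map f :=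
      Multiset.map_le_map hval
    constructor
    · exact myFoldMaxMono zero (Multiset.filter_le_filter _ hmap)
    · exact hnegle _ _ (myFoldMinMono zero (Multiset.filter_le_filter _ hmap))
  intro x
  by_cases hx : g x = zero
  · exact Or.inl hx
  · right
    intro y hy
    have hMx : max (g x) (neg (g x)) = max (P x) (neg (Q x)) :=
      (habs x).resolve_left hx
    have hle : max (P y) (neg (Q y)) ≤ max (P x) (neg (Q x)) := by
      obtain ⟨h1, h2⟩ := hmono y x hy.le
      exact max_le_max h1 h2
    rcases habs y with h | h
    · rw [h, hzero, max_self, hMx]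
      exact le_trans (hPz x) (le_max_left _ _)
    · rw [h, hMx]
      exact hle
end

section
/- The canonical Möbius function is an inverse of the Riemann function under the splitting rule: let X be a poset in which every interval [x, y] is finite, and suppose L has a greatest element 1 with 0 < 1 (so −1 is its least element). Define ζ(x, y) := 1 if x ≤ y and 0 otherwise, and μ(x, y) := 1 if x = y, μ(x, y) := −1 if x ⋖ y, and μ(x, y) := 0 otherwise. Then for all x ≤ y in X: ⟨⊻ {μ(x, u) ⊼ ζ(u, y) : x ≤ u ≤ y}⟩₋⁺ equals 1 if x = y and equals 0 if x < y. -/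
lemma mem_le_fold_max {L : Type*} [LinearOrder L] (z : L) (s : Multiset L) :
    ∀ a ∈ s, a ≤ s.fold max z := by
  induction s using Multiset.induction_on with
  | empty => simp
  | cons b t ih =>
    intro a ha
    rw [Multiset.fold_cons_left]
    rcases Multiset.mem_cons.mp ha with h | h
    · subst h; exact le_max_left _ _
    · exact le_trans (ih a h) (le_max_right _ _)

lemma fold_min_const {L : Type*} [LinearOrder L] (z c : L) (hc : c ≤ z) (s : Multiset L)
    (hs : s ≠ 0) (h : ∀ a ∈ s, a = c) : s.fold min z = c := by
  induction s using Multiset.induction_on with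
  | empty => exact absurd rfl hs
  | cons b t ih =>
    have hb : b = c := h b (Multiset.mem_cons_self _ _)
    rw [Multiset.fold_cons_left, hb]
    by_cases ht : t = 0
    · subst ht; simp [min_eq_left hc]
    · rw [ih ht (fun a ha => h a (Multiset.mem_cons_of_mem ha))]; exact min_self c

/-- the canonical Möbius function is an inverse of the Riemann
function under the splitting rule: `⟨⊻_{x ≤ u ≤ y} μ(x,u) ⊼ ζ(u,y)⟩₋⁺` equals
`one` if `x = y` and `zero` if `x < y`. -/
theorem canonical_mobius_inverse_of_riemann {L : Type*} [LinearOrder L]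
    (neg : L → L) (zero one : L)
    (hinv : ∀ x, neg (neg x) = x)
    (hord : ∀ x y, x ≤ y ↔ neg y ≤ neg x)
    (hzero : neg zero = zero)
    (hone : ∀ x : L, x ≤ one) (h01 : zero < one)
    {X : Type*} [PartialOrder X]
    (hfin : ∀ x y : X, {u | x ≤ u ∧ u ≤ y}.Finite)
    (ζ μ : X → X → L)
    (hζ1 : ∀ x y : X, x ≤ y → ζ x y = one)
    (hζ2 : ∀ x y : X, ¬ x ≤ y → ζ x y = zero)
    (hμ1 : ∀ x : X, μ x x = one)
    (hμ2 : ∀ x y : X, x ⋖ y → μ x y = neg one)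
    (hμ3 : ∀ x y : X, x ≠ y → ¬ x ⋖ y → μ x y = zero) :
    ∀ x y : X, x ≤ y →
      (x = y →
        splitEval neg zero
          ((hfin x y).toFinset.val.map (fun u => symMin neg zero (μ x u) (ζ u y))) = one) ∧
      (x < y →
        splitEval neg zero
          ((hfin x y).toFinset.val.map (fun u => symMin neg zero (μ x u) (ζ u y))) = zero) := by

  -- basic sign facts
  have hn1le : neg one ≤ zero := by
    have := (hord zero one).mp h01.le
    rwa [hzero] at this
  have hn1 : neg one < zero := by
    refine lt_of_le_of_ne hn1le ?_
    intro h
    have : neg (neg one) = neg zero := by rw [h]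
    rw [hinv, hzero] at this
    exact h01.ne' this
  have hn1lt1 : neg one < one := hn1.trans h01
  have habs1 : max one (neg one) = one := max_eq_left hn1lt1.le
  have habsn1 : max (neg one) (neg (neg one)) = one := by
    rw [hinv]; exact max_eq_right hn1lt1.le
  have habs0 : max zero (neg zero) = zero := by rw [hzero, max_self]
  -- symMin values
  have hsm1 : symMin neg zero one one = one := by
    rw [symMin, if_neg, habs1, min_self]
    rintro (⟨h, -⟩ | ⟨h, -⟩) <;> exact absurd h (not_lt.mpr h01.le)
  have hsmn : symMin neg zero (neg one) one = neg one := by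
    rw [symMin, if_pos (Or.inl ⟨hn1, h01⟩), habsn1, habs1, min_self]
  have hsm0 : symMin neg zero zero one = zero := by
    rw [symMin, if_neg, habs0, habs1, min_eq_left h01.le]
    rintro (⟨h, -⟩ | ⟨h, -⟩)
    · exact lt_irrefl _ h
    · exact absurd h (not_lt.mpr h01.le)
  intro x y hxy
  set S := (hfin x y).toFinset.val with hS
  set f : X → L := fun u => symMin neg zero (μ x u) (ζ u y) with hfdef
  have hmemS : ∀ u : X, u ∈ S ↔ (x ≤ u ∧ u ≤ y) := by
    intro u
    rw [hS, ← Finset.mem_def, Set.Finite.mem_toFinset]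
    exact Iff.rfl
  have hμtri : ∀ u : X, μ x u = one ∨ μ x u = neg one ∨ μ x u = zero := by
    intro u
    by_cases h1 : x = u
    · subst h1; exact Or.inl (hμ1 x)
    · by_cases h2 : x ⋖ u
      · exact Or.inr (Or.inl (hμ2 x u h2))
      · exact Or.inr (Or.inr (hμ3 x u h1 h2))
  have hf : ∀ u : X, u ∈ S → f u = μ x u := by
    intro u hu
    have huy : u ≤ y := ((hmemS u).mp hu).2
    rw [hfdef]
    simp only
    rw [hζ1 u y huy]
    rcases hμtri u with h | h | h <;> rw [h] <;> [exact hsm1; exact hsmn; exact hsm0]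
  set T := S.map f with hT
  -- every element of T is one, neg one, or zero
  have hTtri : ∀ t ∈ T, t = one ∨ t = neg one ∨ t = zero := by
    intro t ht
    rcases Multiset.mem_map.mp ht with ⟨u, hu, rfl⟩
    rw [hf u hu]
    exact hμtri u
  -- one is in T
  have hxS : x ∈ S := (hmemS x).mpr ⟨le_refl x, hxy⟩
  have h1T : one ∈ T := by
    refine Multiset.mem_map.mpr ⟨x, hxS, ?_⟩
    rw [hf x hxS, hμ1]
  -- the positive fold is one
  have hP : (T.filter (fun t => zero ≤ t)).fold max zero = one := by
    refine le_antisymm (hone _) ?_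
    exact mem_le_fold_max zero _ one (Multiset.mem_filter.mpr ⟨h1T, h01.le⟩)
  -- all negative-filter elements are neg one
  have hQall : ∀ t ∈ T.filter (fun t => t < zero), t = neg one := by
    intro t ht
    rcases Multiset.mem_filter.mp ht with ⟨htT, htlt⟩
    rcases hTtri t htT with h | h | h
    · exact absurd (h ▸ htlt) (not_lt.mpr h01.le)
    · exact h
    · exact absurd (h ▸ htlt) (lt_irrefl zero)
  constructor
  · -- x = y
    intro hxe
    have hQ : (T.filter (fun t => t < zero)) = 0 := by
      rw [Multiset.filter_eq_nil]
      intro t ht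
      rcases Multiset.mem_map.mp ht with ⟨u, hu, rfl⟩
      have : u = x := le_antisymm (hxe ▸ ((hmemS u).mp hu).2) ((hmemS u).mp hu).1
      subst this
      rw [hf u hxS, hμ1]
      exact not_lt.mpr h01.le
    rw [splitEval, hP, hQ, Multiset.fold_zero]
    rw [symMax, if_neg, habs1, habs0, max_eq_left h01.le, if_neg]
    · rintro (h | h)
      · exact absurd h hn1lt1.ne'
      · rw [hzero] at h; exact h01.ne' h
    · intro h; exact hn1.ne h.symm
  · -- x < y
    intro hlt
    -- find a cover of x inside [x, y]
    have hfin2 : {u : X | x < u ∧ u ≤ y}.Finite :=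
      (hfin x y).subset (by rintro u ⟨h1, h2⟩; exact ⟨h1.le, h2⟩)
    obtain ⟨m, hmF, hmin⟩ := Finset.exists_minimal (s := hfin2.toFinset)
      ⟨y, (Set.Finite.mem_toFinset _).mpr ⟨hlt, le_refl y⟩⟩
    obtain ⟨hxm, hmy⟩ := (Set.Finite.mem_toFinset _).mp hmF
    have hmS : m ∈ S := (hmemS m).mpr ⟨hxm.le, hmy⟩
    have hcov : x ⋖ m := by
      refine ⟨hxm, ?_⟩
      intro z hxz hzm
      exact hzm.not_ge (hmin ((Set.Finite.mem_toFinset _).mpr ⟨hxz, hzm.le.trans hmy⟩) hzm.le)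
    have hnT : neg one ∈ T := by
      refine Multiset.mem_map.mpr ⟨m, hmS, ?_⟩
      rw [hf m hmS, hμ2 x m hcov]
    have hnfil : neg one ∈ T.filter (fun t => t < zero) :=
      Multiset.mem_filter.mpr ⟨hnT, hn1⟩
    have hQne : (T.filter (fun t => t < zero)) ≠ 0 := by
      intro h; rw [h] at hnfil; exact absurd hnfil (Multiset.notMem_zero _)
    have hQ : (T.filter (fun t => t < zero)).fold min zero = neg one :=
      fold_min_const zero (neg one) hn1le _ hQne hQall
    rw [splitEval, hP, hQ, symMax, if_pos rfl]
end

section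
/- Properties of the canonical Möbius transform under the splitting rule: let X be a poset in which every principal ideal {y : y ≤ x} is finite, and let g : X → L be such that |g| is isotone (y ≤ x implies |g(y)| ≤ |g(x)|). Define f(x) := ⟨⊻ ({g(x)} + {−g(y) : y ⋖ x})⟩₋⁺ (a multiset with one term g(x) and one term −g(y) for each y covered by x). Then for every x ∈ X: (i) if for every y ⋖ x either |g(x)| > |g(y)| or g(x) = −g(y), then f(x) = g(x); (ii) if g(x) = g(y) for some y ⋖ x, then f(x) = 0; (iii) for every y ≤ x with |g(y)| < |g(x)|, one has |f(y)| < |g(x)|. -/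
section Aux
variable {L : Type*} [LinearOrder L] {neg : L → L} {zero : L}

lemma aux_fold_max (z : L) (s : Multiset L) :
    z ≤ s.fold max z ∧ (∀ b ∈ s, b ≤ s.fold max z) ∧ (s.fold max z = z ∨ s.fold max z ∈ s) := by
  induction s using Multiset.induction with
  | empty => simp
  | cons a s ih =>
    rw [Multiset.fold_cons_left]
    refine ⟨ih.1.trans (le_max_right _ _), ?_, ?_⟩
    · intro b hb
      rcases Multiset.mem_cons.1 hb with rfl | hb
      · exact le_max_left _ _
      · exact (ih.2.1 b hb).trans (le_max_right _ _)
    · rcases le_total a (s.fold max z) with h | h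
      · rw [max_eq_right h]
        rcases ih.2.2 with h' | h'
        · exact Or.inl h'
        · exact Or.inr (Multiset.mem_cons_of_mem h')
      · rw [max_eq_left h]
        exact Or.inr (Multiset.mem_cons_self _ _)

lemma aux_fold_min (z : L) (s : Multiset L) :
    s.fold min z ≤ z ∧ (∀ b ∈ s, s.fold min z ≤ b) ∧ (s.fold min z = z ∨ s.fold min z ∈ s) := by
  induction s using Multiset.induction with
  | empty => simp
  | cons a s ih =>
    rw [Multiset.fold_cons_left]
    refine ⟨(min_le_right _ _).trans ih.1, ?_, ?_⟩
    · intro b hb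
      rcases Multiset.mem_cons.1 hb with rfl | hb
      · exact min_le_left _ _
      · exact (min_le_right _ _).trans (ih.2.1 b hb)
    · rcases le_total a (s.fold min z) with h | h
      · rw [min_eq_left h]
        exact Or.inr (Multiset.mem_cons_self _ _)
      · rw [min_eq_right h]
        rcases ih.2.2 with h' | h'
        · exact Or.inl h'
        · exact Or.inr (Multiset.mem_cons_of_mem h')

lemma neg_le_neg' (hord : ∀ x y, x ≤ y ↔ neg y ≤ neg x) {u v : L} (h : u ≤ v) :
    neg v ≤ neg u := (hord u v).1 h

lemma neg_lt_neg' (hinv : ∀ x, neg (neg x) = x) (hord : ∀ x y, x ≤ y ↔ neg y ≤ neg x)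
    {u v : L} (h : u < v) : neg v < neg u := by
  refine lt_of_le_of_ne (neg_le_neg' hord h.le) fun he => h.ne ?_
  rw [← hinv u, ← he, hinv]

lemma abs_nonneg' (hord : ∀ x y, x ≤ y ↔ neg y ≤ neg x) (hzero : neg zero = zero) (u : L) :
    zero ≤ max u (neg u) := by
  rcases le_total zero u with h | h
  · exact le_max_of_le_left h
  · have := neg_le_neg' hord h
    rw [hzero] at this
    exact le_max_of_le_right this

lemma abs_of_nonneg' (hord : ∀ x y, x ≤ y ↔ neg y ≤ neg x) (hzero : neg zero = zero)
    {u : L} (h : zero ≤ u) : max u (neg u) = u := by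
  have := neg_le_neg' hord h
  rw [hzero] at this
  exact max_eq_left (this.trans h)

lemma abs_of_nonpos' (hord : ∀ x y, x ≤ y ↔ neg y ≤ neg x) (hzero : neg zero = zero)
    {u : L} (h : u ≤ zero) : max u (neg u) = neg u := by
  have := neg_le_neg' hord h
  rw [hzero] at this
  exact max_eq_right (h.trans this)

lemma abs_neg' (hinv : ∀ x, neg (neg x) = x) (u : L) :
    max (neg u) (neg (neg u)) = max u (neg u) := by
  rw [hinv, max_comm]

end Aux

section Main
variable {L : Type*} [LinearOrder L]

lemma splitEval_pq {neg : L → L} {zero : L} (s : Multiset L) :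
    splitEval neg zero s =
      symMax neg zero ((s.filter (fun x => zero ≤ x)).fold max zero)
        ((s.filter (fun x => x < zero)).fold min zero) := rfl

lemma pq_facts {zero : L} (s : Multiset L) :
    (zero ≤ (s.filter (fun x => zero ≤ x)).fold max zero) ∧
    (∀ b ∈ s, zero ≤ b → b ≤ (s.filter (fun x => zero ≤ x)).fold max zero) ∧
    ((s.filter (fun x => zero ≤ x)).fold max zero = zero ∨
      ((s.filter (fun x => zero ≤ x)).fold max zero ∈ s ∧
        zero ≤ (s.filter (fun x => zero ≤ x)).fold max zero)) ∧
    ((s.filter (fun x => x < zero)).fold min zero ≤ zero) ∧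
    (∀ b ∈ s, b < zero → (s.filter (fun x => x < zero)).fold min zero ≤ b) ∧
    ((s.filter (fun x => x < zero)).fold min zero = zero ∨
      ((s.filter (fun x => x < zero)).fold min zero ∈ s ∧
        (s.filter (fun x => x < zero)).fold min zero < zero)) := by
  obtain ⟨hp0, hpub, hpmem⟩ := aux_fold_max zero (s.filter (fun x => zero ≤ x))
  obtain ⟨hq0, hqlb, hqmem⟩ := aux_fold_min zero (s.filter (fun x => x < zero))
  refine ⟨hp0, fun b hb h => hpub b (Multiset.mem_filter.2 ⟨hb, h⟩), ?_, hq0,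
    fun b hb h => hqlb b (Multiset.mem_filter.2 ⟨hb, h⟩), ?_⟩
  · rcases hpmem with h | h
    · exact Or.inl h
    · exact Or.inr ⟨(Multiset.mem_filter.1 h).1, (Multiset.mem_filter.1 h).2⟩
  · rcases hqmem with h | h
    · exact Or.inl h
    · exact Or.inr ⟨(Multiset.mem_filter.1 h).1, (Multiset.mem_filter.1 h).2⟩

lemma splitEval_eq_self (neg : L → L) (zero : L)
    (hinv : ∀ x, neg (neg x) = x) (hord : ∀ x y, x ≤ y ↔ neg y ≤ neg x)
    (hzero : neg zero = zero) (s : Multiset L) (a : L) (ha : a ∈ s)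
    (hlt : ∀ b ∈ s, max b (neg b) < max a (neg a) ∨ b = a) :
    splitEval neg zero s = a := by
  obtain ⟨hp0, hpub, hpmem, hq0, hqlb, hqmem⟩ := pq_facts (zero := zero) s
  rw [splitEval_pq]
  set p := (s.filter (fun x => zero ≤ x)).fold max zero with hpdef
  set q := (s.filter (fun x => x < zero)).fold min zero with hqdef
  rcases lt_trichotomy a zero with hc | hc | hc
  · -- a < zero, |a| = neg a
    have hA : max a (neg a) = neg a := abs_of_nonpos' hord hzero hc.le
    have hz : zero < neg a := by
      have := neg_lt_neg' hinv hord hc; rwa [hzero] at this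
    have hqa : q = a := by
      refine le_antisymm (hqlb a ha hc) ?_
      rcases hqmem with h | h
      · rw [h]; exact hc.le
      · rcases hlt q h.1 with h' | h'
        · rw [abs_of_nonpos' hord hzero h.2.le, hA] at h'
          exact (hord a q).2 h'.le
        · rw [h']
    have hpa : p < neg a := by
      rcases hpmem with h | h
      · rw [h]; exact hz
      · rcases hlt p h.1 with h' | h'
        · rwa [abs_of_nonneg' hord hzero h.2, hA] at h'
        · exact absurd (h' ▸ h.2) (not_le.2 hc)
    have h1 : ¬ (a = neg p) := by
      intro h
      rw [← hinv p, ← h] at hpa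
      exact absurd hpa (lt_irrefl _)
    have hM : max (max p (neg p)) (max a (neg a)) = neg a := by
      rw [abs_of_nonneg' hord hzero hp0, hA]
      exact max_eq_right hpa.le
    rw [hqa, symMax, if_neg h1, hM, if_pos (Or.inr rfl)]
    exact hinv a
  · -- a = zero
    have hall : ∀ b ∈ s, b = a := by
      intro b hb
      rcases hlt b hb with h | h
      · rw [hc, hzero, max_self] at h
        exact absurd (abs_nonneg' hord hzero b) (not_le.2 h)
      · exact h
    have hp : p = a := by
      rcases hpmem with h | h
      · rw [h, hc]
      · exact hall p h.1
    have hq : q = a := by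
      rcases hqmem with h | h
      · rw [h, hc]
      · exact hall q h.1
    have : a = neg a := by rw [hc, hzero]
    rw [hp, hq, symMax, if_pos this, hc]
  · -- zero < a
    have hA : max a (neg a) = a := abs_of_nonneg' hord hzero hc.le
    have hna : neg a < zero := by
      have := neg_lt_neg' hinv hord hc; rwa [hzero] at this
    have hpa : p = a := by
      refine le_antisymm ?_ (hpub a ha hc.le)
      rcases hpmem with h | h
      · rw [h]; exact hc.le
      · rcases hlt p h.1 with h' | h'
        · rw [abs_of_nonneg' hord hzero h.2, hA] at h'
          exact h'.le
        · rw [h']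
    have hqgt : neg a < q := by
      rcases hqmem with h | h
      · rw [h]; exact hna
      · rcases hlt q h.1 with h' | h'
        · rw [abs_of_nonpos' hord hzero h.2.le, hA] at h'
          have := neg_lt_neg' hinv hord h'
          rwa [hinv] at this
        · exact absurd (h' ▸ h.2) (not_lt.2 hc.le)
    have hqabs : max q (neg q) < a := by
      rcases hqmem with h | h
      · rw [h, hzero, max_self]; exact hc
      · rcases hlt q h.1 with h' | h'
        · rwa [hA] at h'
        · exact absurd (h' ▸ h.2) (not_lt.2 hc.le)
    have h1 : ¬ q = neg a := fun h => absurd hqgt (by rw [h]; exact lt_irrefl _)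
    have hM : max (max a (neg a)) (max q (neg q)) = a := by
      rw [hA]; exact max_eq_left hqabs.le
    have h2 : ¬ (max (max a (neg a)) (max q (neg q)) = neg a ∨
        max (max a (neg a)) (max q (neg q)) = neg q) := by
      rw [hM]
      rintro (h | h)
      · exact absurd h (ne_of_gt (lt_trans hna hc))
      · exact absurd h (ne_of_gt (lt_of_le_of_lt (le_max_right q (neg q)) hqabs))
    rw [hpa, symMax, if_neg h1, if_neg h2, hM]

lemma splitEval_eq_zero (neg : L → L) (zero : L)
    (hinv : ∀ x, neg (neg x) = x) (hord : ∀ x y, x ≤ y ↔ neg y ≤ neg x)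
    (hzero : neg zero = zero) (s : Multiset L) (a : L) (ha : a ∈ s) (hna : neg a ∈ s)
    (hle : ∀ b ∈ s, max b (neg b) ≤ max a (neg a)) :
    splitEval neg zero s = zero := by
  obtain ⟨hp0, hpub, hpmem, hq0, hqlb, hqmem⟩ := pq_facts (zero := zero) s
  rw [splitEval_pq]
  set p := (s.filter (fun x => zero ≤ x)).fold max zero with hpdef
  set q := (s.filter (fun x => x < zero)).fold min zero with hqdef
  rcases lt_trichotomy a zero with hc | hc | hc
  · -- a < zero : p = neg a, q = a
    have hA : max a (neg a) = neg a := abs_of_nonpos' hord hzero hc.le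
    have hz : zero < neg a := by
      have := neg_lt_neg' hinv hord hc; rwa [hzero] at this
    have hqa : q = a := by
      refine le_antisymm (hqlb a ha hc) ?_
      rcases hqmem with h | h
      · rw [h]; exact hc.le
      · have h' := hle q h.1
        rw [abs_of_nonpos' hord hzero h.2.le, hA] at h'
        exact (hord a q).2 h'
    have hpa : p = neg a := by
      refine le_antisymm ?_ (hpub (neg a) hna hz.le)
      rcases hpmem with h | h
      · rw [h]; exact hz.le
      · have h' := hle p h.1
        rwa [abs_of_nonneg' hord hzero h.2, hA] at h'
    rw [hqa, hpa, symMax, if_pos (hinv a).symm]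
  · -- a = zero
    have hall : ∀ b ∈ s, b = a := by
      intro b hb
      have h := hle b hb
      rw [hc, hzero, max_self] at h
      have h1 : b ≤ zero := le_trans (le_max_left b (neg b)) h
      have h2 : neg b ≤ zero := le_trans (le_max_right b (neg b)) h
      have h3 : zero ≤ b := by
        have := neg_le_neg' hord h2
        rwa [hzero, hinv] at this
      rw [hc]
      exact le_antisymm h1 h3
    have hp : p = a := by
      rcases hpmem with h | h
      · rw [h, hc]
      · exact hall p h.1
    have hq : q = a := by
      rcases hqmem with h | h
      · rw [h, hc]
      · exact hall q h.1
    have : a = neg a := by rw [hc, hzero]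
    rw [hp, hq, symMax, if_pos this]
  · -- zero < a : p = a, q = neg a
    have hA : max a (neg a) = a := abs_of_nonneg' hord hzero hc.le
    have hnaz : neg a < zero := by
      have := neg_lt_neg' hinv hord hc; rwa [hzero] at this
    have hpa : p = a := by
      refine le_antisymm ?_ (hpub a ha hc.le)
      rcases hpmem with h | h
      · rw [h]; exact hc.le
      · have h' := hle p h.1
        rwa [abs_of_nonneg' hord hzero h.2, hA] at h'
    have hqa : q = neg a := by
      refine le_antisymm (hqlb (neg a) hna hnaz) ?_
      rcases hqmem with h | h
      · rw [h]; exact hnaz.le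
      · have h' := hle q h.1
        rw [abs_of_nonpos' hord hzero h.2.le, hA] at h'
        have := neg_le_neg' hord h'
        rwa [hinv] at this
    rw [hqa, hpa, symMax, if_pos rfl]

lemma splitEval_abs_lt (neg : L → L) (zero : L)
    (hinv : ∀ x, neg (neg x) = x) (hord : ∀ x y, x ≤ y ↔ neg y ≤ neg x)
    (hzero : neg zero = zero) (s : Multiset L) (C : L) (hC : zero < C)
    (hlt : ∀ b ∈ s, max b (neg b) < C) :
    max (splitEval neg zero s) (neg (splitEval neg zero s)) < C := by
  obtain ⟨hp0, hpub, hpmem, hq0, hqlb, hqmem⟩ := pq_facts (zero := zero) s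
  rw [splitEval_pq]
  set p := (s.filter (fun x => zero ≤ x)).fold max zero with hpdef
  set q := (s.filter (fun x => x < zero)).fold min zero with hqdef
  have hpC : max p (neg p) < C := by
    rcases hpmem with h | h
    · rw [h, hzero, max_self]; exact hC
    · exact hlt p h.1
  have hqC : max q (neg q) < C := by
    rcases hqmem with h | h
    · rw [h, hzero, max_self]; exact hC
    · exact hlt q h.1
  have hM : max (max p (neg p)) (max q (neg q)) < C := max_lt hpC hqC
  have hM0 : zero ≤ max (max p (neg p)) (max q (neg q)) :=
    le_trans (abs_nonneg' hord hzero p) (le_max_left _ _)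
  rw [symMax]
  split_ifs with h1 h2
  · rw [hzero, max_self]; exact hC
  · rw [hinv, max_comm (neg (max (max p (neg p)) (max q (neg q))))]
    rw [abs_of_nonneg' hord hzero hM0]
    exact hM
  · rw [abs_of_nonneg' hord hzero hM0]
    exact hM

end Main
/-- properties of the canonical Möbius transform
`f x = ⟨⊻ ({g x} + {−g y : y ⋖ x})⟩₋⁺` under the splitting rule, when `|g|`
is isotone.  Here `|x| = max x (neg x)`. -/
theorem canonical_mobius_transform_properties {L : Type*} [LinearOrder L]
    (neg : L → L) (zero : L)
    (hinv : ∀ x, neg (neg x) = x)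
    (hord : ∀ x y, x ≤ y ↔ neg y ≤ neg x)
    (hzero : neg zero = zero)
    {X : Type*} [PartialOrder X]
    (hfin : ∀ x : X, {y | y ≤ x}.Finite)
    (hcov : ∀ x : X, {y | y ⋖ x}.Finite)
    (g f : X → L)
    (habs : ∀ y x : X, y ≤ x → max (g y) (neg (g y)) ≤ max (g x) (neg (g x)))
    (hf : ∀ x, f x = splitEval neg zero
      (g x ::ₘ (hcov x).toFinset.val.map (fun y => neg (g y)))) :
    ∀ x : X,
      ((∀ y, y ⋖ x → max (g y) (neg (g y)) < max (g x) (neg (g x)) ∨ g x = neg (g y)) →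
        f x = g x) ∧
      ((∃ y, y ⋖ x ∧ g x = g y) → f x = zero) ∧
      (∀ y, y ≤ x → max (g y) (neg (g y)) < max (g x) (neg (g x)) →
        max (f y) (neg (f y)) < max (g x) (neg (g x))) := by
  classical
  have hmem : ∀ (w : X) (b : L),
      b ∈ (g w ::ₘ (hcov w).toFinset.val.map (fun y => neg (g y))) ↔
        (b = g w ∨ ∃ y, y ⋖ w ∧ b = neg (g y)) := by
    intro w b
    simp only [Multiset.mem_cons, Multiset.mem_map, Finset.mem_val, Set.Finite.mem_toFinset,
      Set.mem_setOf_eq]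
    constructor
    · rintro (h | ⟨y, hy, rfl⟩)
      · exact Or.inl h
      · exact Or.inr ⟨y, hy, rfl⟩
    · rintro (h | ⟨y, hy, rfl⟩)
      · exact Or.inl h
      · exact Or.inr ⟨y, hy, rfl⟩
  intro x
  refine ⟨?_, ?_, ?_⟩
  · intro H
    rw [hf x]
    refine splitEval_eq_self neg zero hinv hord hzero _ _ (Multiset.mem_cons_self _ _) ?_
    intro b hb
    rcases (hmem x b).1 hb with rfl | ⟨y, hy, rfl⟩
    · exact Or.inr rfl
    · rcases H y hy with h | h
      · left; rw [abs_neg' hinv]; exact h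
      · exact Or.inr h.symm
  · rintro ⟨y, hy, hgy⟩
    rw [hf x]
    refine splitEval_eq_zero neg zero hinv hord hzero _ _ (Multiset.mem_cons_self _ _) ?_ ?_
    · exact (hmem x _).2 (Or.inr ⟨y, hy, by rw [hgy]⟩)
    · intro b hb
      rcases (hmem x b).1 hb with rfl | ⟨z, hz, rfl⟩
      · exact le_refl _
      · rw [abs_neg' hinv]
        exact habs z x hz.le
  · intro y hyx hlt
    rw [hf y]
    refine splitEval_abs_lt neg zero hinv hord hzero _ _ ?_ ?_
    · exact lt_of_le_of_lt (abs_nonneg' hord hzero (g y)) hlt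
    · intro b hb
      rcases (hmem y b).1 hb with rfl | ⟨z, hz, rfl⟩
      · exact hlt
      · rw [abs_neg' hinv]
        exact lt_of_le_of_lt (habs z y hz.le) hlt
end

section
/- Inversion theorem for the splitting rule with the canonical Möbius function: let X be a poset with a least element in which every principal ideal {y : y ≤ x} is finite, and let g : X → L be such that |g| is isotone (y ≤ x implies |g(y)| ≤ |g(x)|) and sign-coherent on comparable pairs (for all y ≤ x, |g(y)| = |g(x)| implies g(y) = g(x)). Define the canonical Möbius transform f(x) := ⟨⊻ ({g(x)} + {−g(y) : y ⋖ x})⟩₋⁺. Then f solves the inversion equation: for every x ∈ X, ⟨⊻ {f(y) : y ≤ x}⟩₋⁺ = g(x). -/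
set_option linter.unusedSectionVars false
set_option maxHeartbeats 1000000

section auxfolds
variable {L : Type*} [LinearOrder L]

lemma aux_le_fold_max {t : Multiset L} {z a : L} (h : a ∈ t) : a ≤ t.fold max z := by
  induction t using Multiset.induction_on with
  | empty => simp at h
  | cons b s ih =>
    rw [Multiset.fold_cons_left]
    rcases Multiset.mem_cons.1 h with h | h
    · exact h ▸ le_max_left _ _
    · exact le_trans (ih h) (le_max_right _ _)

lemma aux_self_le_fold_max (t : Multiset L) (z : L) : z ≤ t.fold max z := by
  induction t using Multiset.induction_on with
  | empty => simp
  | cons b s ih =>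
    rw [Multiset.fold_cons_left]
    exact le_trans ih (le_max_right _ _)

lemma aux_fold_max_mem (t : Multiset L) (z : L) : t.fold max z = z ∨ t.fold max z ∈ t := by
  induction t using Multiset.induction_on with
  | empty => simp
  | cons b s ih =>
    rw [Multiset.fold_cons_left]
    rcases max_choice b (s.fold max z) with h | h
    · rw [h]; exact Or.inr (Multiset.mem_cons_self b s)
    · rw [h]
      rcases ih with h' | h'
      · exact Or.inl h'
      · exact Or.inr (Multiset.mem_cons_of_mem h')

lemma aux_fold_min_le {t : Multiset L} {z a : L} (h : a ∈ t) : t.fold min z ≤ a := by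
  induction t using Multiset.induction_on with
  | empty => simp at h
  | cons b s ih =>
    rw [Multiset.fold_cons_left]
    rcases Multiset.mem_cons.1 h with h | h
    · exact h ▸ min_le_left _ _
    · exact le_trans (min_le_right _ _) (ih h)

lemma aux_fold_min_le_self (t : Multiset L) (z : L) : t.fold min z ≤ z := by
  induction t using Multiset.induction_on with
  | empty => simp
  | cons b s ih =>
    rw [Multiset.fold_cons_left]
    exact le_trans (min_le_right _ _) ih

lemma aux_fold_min_mem (t : Multiset L) (z : L) : t.fold min z = z ∨ t.fold min z ∈ t := by
  induction t using Multiset.induction_on with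
  | empty => simp
  | cons b s ih =>
    rw [Multiset.fold_cons_left]
    rcases min_choice b (s.fold min z) with h | h
    · rw [h]; exact Or.inr (Multiset.mem_cons_self b s)
    · rw [h]
      rcases ih with h' | h'
      · exact Or.inl h'
      · exact Or.inr (Multiset.mem_cons_of_mem h')

end auxfolds

section negbasics
variable {L : Type*} [LinearOrder L] {neg : L → L} {zero : L}

lemma aux_neg_inj (hinv : ∀ x, neg (neg x) = x) : Function.Injective neg :=
  fun a b h => by rw [← hinv a, h, hinv]

lemma aux_neg_lt (hinv : ∀ x, neg (neg x) = x) (hord : ∀ x y, x ≤ y ↔ neg y ≤ neg x)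
    {a b : L} (h : a < b) : neg b < neg a :=
  lt_of_le_of_ne ((hord a b).1 h.le) fun he => h.ne' (aux_neg_inj hinv he)

lemma aux_abs_nonneg (hord : ∀ x y, x ≤ y ↔ neg y ≤ neg x) (hzero : neg zero = zero)
    (a : L) : zero ≤ max a (neg a) := by
  by_contra hc
  push_neg at hc
  have h1 : a < zero := lt_of_le_of_lt (le_max_left _ _) hc
  have h2 : neg a < zero := lt_of_le_of_lt (le_max_right _ _) hc
  exact absurd ((hord zero a).2 (by rw [hzero]; exact h2.le)) (not_le.2 h1)

lemma aux_abs_eq_zero (hord : ∀ x y, x ≤ y ↔ neg y ≤ neg x) (hzero : neg zero = zero)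
    {a : L} (h : max a (neg a) ≤ zero) : a = zero :=
  le_antisymm (le_trans (le_max_left _ _) h)
    ((hord zero a).2 (by rw [hzero]; exact le_trans (le_max_right _ _) h))

lemma aux_abs_of_nonneg (hord : ∀ x y, x ≤ y ↔ neg y ≤ neg x) (hzero : neg zero = zero)
    {a : L} (h : zero ≤ a) : max a (neg a) = a :=
  max_eq_left (le_trans (by rw [← hzero]; exact (hord zero a).1 h) h)

lemma aux_abs_of_nonpos (hord : ∀ x y, x ≤ y ↔ neg y ≤ neg x) (hzero : neg zero = zero)
    {a : L} (h : a ≤ zero) : max a (neg a) = neg a :=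
  max_eq_right (h.trans (by rw [← hzero]; exact (hord a zero).1 h))

lemma aux_abs_neg (hinv : ∀ x, neg (neg x) = x) (a : L) :
    max (neg a) (neg (neg a)) = max a (neg a) := by rw [hinv]; exact max_comm _ _

lemma aux_symMax_spec (hinv : ∀ x, neg (neg x) = x)
    (hord : ∀ x y, x ≤ y ↔ neg y ≤ neg x) (hzero : neg zero = zero)
    {p q : L} (hp : zero ≤ p) (hq : q ≤ zero) :
    symMax neg zero p q = if neg q < p then p else if p < neg q then q else zero := by
  have hnegp : neg p ≤ zero := by rw [← hzero]; exact (hord zero p).1 hp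
  have hnegq : zero ≤ neg q := by rw [← hzero]; exact (hord q zero).1 hq
  unfold symMax
  rw [aux_abs_of_nonneg hord hzero hp, aux_abs_of_nonpos hord hzero hq]
  by_cases hqp : q = neg p
  · have hqq : neg q = p := by rw [hqp, hinv]
    rw [if_pos hqp, hqq, if_neg (lt_irrefl p), if_neg (lt_irrefl p)]
  · rw [if_neg hqp]
    have hne : p ≠ neg q := fun h => hqp (by rw [h, hinv])
    rcases lt_or_gt_of_ne hne with h | h
    · rw [max_eq_right h.le, if_pos (Or.inr rfl), hinv, if_neg (not_lt.2 h.le), if_pos h]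
    · rw [max_eq_left h.le]
      have hcond : ¬(p = neg p ∨ p = neg q) := by
        rintro (h1 | h1)
        · have hp0 : p = zero := le_antisymm (h1 ▸ hnegp) hp
          rw [hp0] at h
          exact absurd h (not_lt.2 hnegq)
        · exact hne h1
      rw [if_neg hcond, if_pos h]

lemma aux_splitEval (hinv : ∀ x, neg (neg x) = x)
    (hord : ∀ x y, x ≤ y ↔ neg y ≤ neg x) (hzero : neg zero = zero)
    (s : Multiset L) :
    splitEval neg zero s =
      if neg ((s.filter (fun a => a < zero)).fold min zero) <
          (s.filter (fun a => zero ≤ a)).fold max zero then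
        (s.filter (fun a => zero ≤ a)).fold max zero
      else if (s.filter (fun a => zero ≤ a)).fold max zero <
          neg ((s.filter (fun a => a < zero)).fold min zero) then
        (s.filter (fun a => a < zero)).fold min zero
      else zero := by
  unfold splitEval
  exact aux_symMax_spec hinv hord hzero (aux_self_le_fold_max _ _) (aux_fold_min_le_self _ _)

end negbasics

lemma aux_f_struct {L : Type*} [LinearOrder L]
    (neg : L → L) (zero : L)
    (hinv : ∀ x, neg (neg x) = x)
    (hord : ∀ x y, x ≤ y ↔ neg y ≤ neg x)
    (hzero : neg zero = zero)
    {X : Type*} [PartialOrder X]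
    (hcov : ∀ x : X, {y | y ⋖ x}.Finite)
    (g f : X → L)
    (habs : ∀ y x : X, y ≤ x → max (g y) (neg (g y)) ≤ max (g x) (neg (g x)))
    (hf : ∀ x, f x = splitEval neg zero
      (g x ::ₘ (hcov x).toFinset.val.map (fun y => neg (g y))))
    (y : X) :
    (f y = g y ∨ f y = zero) ∧
    ((∀ z, z ⋖ y → max (g z) (neg (g z)) ≠ max (g y) (neg (g y))) → f y = g y) := by
  have hmain := aux_splitEval (neg := neg) hinv hord hzero
      (g y ::ₘ (hcov y).toFinset.val.map (fun z => neg (g z)))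
  rw [← hf y] at hmain
  set s : Multiset L := g y ::ₘ (hcov y).toFinset.val.map (fun z => neg (g z)) with hs
  set p := (Multiset.filter (fun a => zero ≤ a) s).fold max zero with hpdef
  set q := (Multiset.filter (fun a => a < zero) s).fold min zero with hqdef
  have habs_s : ∀ a ∈ s, max a (neg a) ≤ max (g y) (neg (g y)) := by
    intro a ha
    rw [hs] at ha
    rcases Multiset.mem_cons.1 ha with rfl | ha
    · exact le_refl _
    · obtain ⟨z, hz, rfl⟩ := Multiset.mem_map.1 ha
      have hzy : z ⋖ y := by
        rw [Finset.mem_val, Set.Finite.mem_toFinset] at hz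
        exact hz
      rw [aux_abs_neg hinv]
      exact habs z y hzy.le
  have hp : zero ≤ p := aux_self_le_fold_max _ _
  have hq : q ≤ zero := aux_fold_min_le_self _ _
  have hpmem : p = zero ∨ p ∈ s := by
    rcases aux_fold_max_mem (Multiset.filter (fun a => zero ≤ a) s) zero with h | h
    · exact Or.inl h
    · exact Or.inr (Multiset.mem_of_mem_filter h)
  have hqmem : q = zero ∨ q ∈ s := by
    rcases aux_fold_min_mem (Multiset.filter (fun a => a < zero) s) zero with h | h
    · exact Or.inl h
    · exact Or.inr (Multiset.mem_of_mem_filter h)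
  have habsy0 : zero ≤ max (g y) (neg (g y)) := aux_abs_nonneg hord hzero _
  have hpabs : p ≤ max (g y) (neg (g y)) := by
    rcases hpmem with h | h
    · rw [h]; exact habsy0
    · exact le_trans (le_max_left _ _) (habs_s p h)
  have hqabs : neg q ≤ max (g y) (neg (g y)) := by
    rcases hqmem with h | h
    · rw [h, hzero]; exact habsy0
    · exact le_trans (le_max_right _ _) (habs_s q h)
  have hgys : g y ∈ s := by rw [hs]; exact Multiset.mem_cons_self _ _
  have hgyp : zero ≤ g y → g y ≤ p := fun h =>
    aux_le_fold_max (Multiset.mem_filter.2 ⟨hgys, h⟩)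
  have hgyq : g y < zero → q ≤ g y := fun h =>
    aux_fold_min_le (Multiset.mem_filter.2 ⟨hgys, h⟩)
  have hkey1 : neg q < p → p = g y := by
    intro h
    rcases le_or_gt zero (g y) with hgy | hgy
    · refine le_antisymm ?_ (hgyp hgy)
      rw [← aux_abs_of_nonneg hord hzero hgy]
      exact hpabs
    · exfalso
      have h2 : neg (g y) ≤ neg q := (hord q (g y)).1 (hgyq hgy)
      have h3 : max (g y) (neg (g y)) ≤ neg q := by
        rw [aux_abs_of_nonpos hord hzero hgy.le]; exact h2
      exact absurd ((h3.trans_lt h).trans_le hpabs) (lt_irrefl _)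
  have hkey2 : p < neg q → q = g y := by
    intro h
    rcases lt_or_ge (g y) zero with hgy | hgy
    · refine le_antisymm (hgyq hgy) ?_
      refine (hord (g y) q).2 ?_
      rw [← aux_abs_of_nonpos hord hzero hgy.le]
      exact hqabs
    · exfalso
      have h2 : neg q ≤ g y := by
        rw [← aux_abs_of_nonneg hord hzero hgy]; exact hqabs
      exact absurd (((hgyp hgy).trans_lt h).trans_le h2) (lt_irrefl _)
  constructor
  · rw [hmain]
    split_ifs with h1 h2
    · exact Or.inl (hkey1 h1)
    · exact Or.inl (hkey2 h2)
    · exact Or.inr rfl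
  · intro hstrict
    have hstrict' : ∀ z, z ⋖ y → max (g z) (neg (g z)) < max (g y) (neg (g y)) :=
      fun z hz => lt_of_le_of_ne (habs z y hz.le) (hstrict z hz)
    have hmem_cover : ∀ a ∈ s, a ≠ g y → ∃ z, z ⋖ y ∧ neg (g z) = a := by
      intro a ha hne
      rw [hs] at ha
      rcases Multiset.mem_cons.1 ha with rfl | ha
      · exact absurd rfl hne
      · obtain ⟨z, hz, hza⟩ := Multiset.mem_map.1 ha
        rw [Finset.mem_val, Set.Finite.mem_toFinset] at hz
        exact ⟨z, hz, hza⟩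
    rcases lt_trichotomy (g y) zero with hgy | hgy | hgy
    · -- g y < zero
      have hq_le : q ≤ g y := hgyq hgy
      have hMeq : max (g y) (neg (g y)) = neg (g y) := aux_abs_of_nonpos hord hzero hgy.le
      have habspos : zero < neg (g y) := by
        have h' := aux_neg_lt hinv hord hgy
        rwa [hzero] at h'
      have hqgy : q = g y := by
        rcases hqmem with h0 | hmem
        · rw [h0] at hq_le; exact absurd hq_le (not_le.2 hgy)
        · by_contra hne
          obtain ⟨z, hzy, hza⟩ := hmem_cover q hmem hne
          have e1 : neg q = g z := by rw [← hza, hinv]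
          have e2 : neg (g y) ≤ neg q := (hord q (g y)).1 hq_le
          have e4 : neg q < neg (g y) := by
            rw [e1, ← hMeq]
            exact lt_of_le_of_lt (le_max_left _ _) (hstrict' z hzy)
          exact absurd (e2.trans_lt e4) (lt_irrefl _)
      have hplt : p < neg q := by
        rw [hqgy]
        rcases hpmem with h0 | hmem
        · rw [h0]; exact habspos
        · by_cases hne : p = g y
          · rw [hne]; exact hgy.trans habspos
          · obtain ⟨z, hzy, hza⟩ := hmem_cover p hmem hne
            calc p ≤ max (g z) (neg (g z)) := by rw [← hza]; exact le_max_right _ _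
              _ < max (g y) (neg (g y)) := hstrict' z hzy
              _ = neg (g y) := hMeq
      rw [hmain, if_neg (not_lt.2 hplt.le), if_pos hplt]
      exact hqgy
    · -- g y = zero
      have hM0 : max (g y) (neg (g y)) = zero := by rw [hgy, hzero, max_self]
      have hnocover : ∀ z, ¬ z ⋖ y := by
        intro z hz
        exact absurd (hstrict' z hz) (not_lt.2 (hM0 ▸ aux_abs_nonneg hord hzero (g z)))
      have hsmem : ∀ a ∈ s, a = zero := by
        intro a ha
        rw [hs] at ha
        rcases Multiset.mem_cons.1 ha with rfl | ha
        · exact hgy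
        · obtain ⟨z, hz, _⟩ := Multiset.mem_map.1 ha
          rw [Finset.mem_val, Set.Finite.mem_toFinset] at hz
          exact absurd hz (hnocover z)
      have hp0 : p = zero := by
        rcases hpmem with h | h
        · exact h
        · exact hsmem p h
      have hq0 : q = zero := by
        rcases hqmem with h | h
        · exact h
        · exact hsmem q h
      rw [hmain, hp0, hq0, hzero, if_neg (lt_irrefl zero), if_neg (lt_irrefl zero)]
      exact hgy.symm
    · -- zero < g y
      have hMeq : max (g y) (neg (g y)) = g y := aux_abs_of_nonneg hord hzero hgy.le
      have hpgy : p = g y := le_antisymm (by rw [← hMeq]; exact hpabs) (hgyp hgy.le)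
      have hlt : neg q < p := by
        rw [hpgy]
        rcases hqmem with h0 | hmem
        · rw [h0, hzero]; exact hgy
        · by_cases hne : q = g y
          · exact absurd (hne ▸ hq) (not_le.2 hgy)
          · obtain ⟨z, hzy, hza⟩ := hmem_cover q hmem hne
            calc neg q = g z := by rw [← hza, hinv]
              _ ≤ max (g z) (neg (g z)) := le_max_left _ _
              _ < max (g y) (neg (g y)) := hstrict' z hzy
              _ = g y := hMeq
      rw [hmain, if_pos hlt]
      exact hpgy

/-- inversion theorem for the splitting rule with the canonical
Möbius transform: if `|g|` is isotone and `g` is sign-coherent on comparable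
pairs, then `f x = ⟨⊻ ({g x} + {−g y : y ⋖ x})⟩₋⁺` satisfies
`⟨⊻_{y ≤ x} f y⟩₋⁺ = g x` for every `x`.  Here `|x| = max x (neg x)`. -/
theorem canonical_mobius_transform_inverts {L : Type*} [LinearOrder L]
    (neg : L → L) (zero : L)
    (hinv : ∀ x, neg (neg x) = x)
    (hord : ∀ x y, x ≤ y ↔ neg y ≤ neg x)
    (hzero : neg zero = zero)
    {X : Type*} [PartialOrder X] [OrderBot X]
    (hfin : ∀ x : X, {y | y ≤ x}.Finite)
    (hcov : ∀ x : X, {y | y ⋖ x}.Finite)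
    (g f : X → L)
    (habs : ∀ y x : X, y ≤ x → max (g y) (neg (g y)) ≤ max (g x) (neg (g x)))
    (hsign : ∀ y x : X, y ≤ x →
      max (g y) (neg (g y)) = max (g x) (neg (g x)) → g y = g x)
    (hf : ∀ x, f x = splitEval neg zero
      (g x ::ₘ (hcov x).toFinset.val.map (fun y => neg (g y)))) :
    ∀ x : X, splitEval neg zero ((hfin x).toFinset.val.map f) = g x := by
  have hstruct := aux_f_struct neg zero hinv hord hzero hcov g f habs hf
  intro x
  have hmain := aux_splitEval (neg := neg) hinv hord hzero ((hfin x).toFinset.val.map f)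
  rw [hmain]
  set T : Multiset L := (hfin x).toFinset.val.map f with hT
  set P := (Multiset.filter (fun a => zero ≤ a) T).fold max zero with hPdef
  set Q := (Multiset.filter (fun a => a < zero) T).fold min zero with hQdef
  set M := max (g x) (neg (g x)) with hM
  -- basic facts about T
  have hmemT : ∀ a ∈ T, ∃ y, y ≤ x ∧ f y = a := by
    intro a ha
    rw [hT] at ha
    obtain ⟨y, hy, hya⟩ := Multiset.mem_map.1 ha
    rw [Finset.mem_val, Set.Finite.mem_toFinset] at hy
    exact ⟨y, hy, hya⟩
  have hMnonneg : zero ≤ M := aux_abs_nonneg hord hzero _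
  have habsT : ∀ a ∈ T, max a (neg a) ≤ M := by
    intro a ha
    obtain ⟨y, hyx, hya⟩ := hmemT a ha
    rcases (hstruct y).1 with h | h
    · rw [← hya, h]; exact habs y x hyx
    · rw [← hya, h, hzero, max_self]; exact hMnonneg
  have heqT : ∀ a ∈ T, max a (neg a) = M → a = g x := by
    intro a ha hM'
    obtain ⟨y, hyx, hya⟩ := hmemT a ha
    rcases (hstruct y).1 with h | h
    · have h2 : max (g y) (neg (g y)) = M := by rw [← hya, h] at hM'; exact hM'
      have h3 := hsign y x hyx (h2.trans hM)
      rw [← hya, h, h3]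
    · -- a = zero, so M = zero, so g x = zero
      have ha0 : a = zero := hya ▸ h
      have hM0 : M ≤ zero := by
        rw [← hM', ha0, hzero, max_self]
      have hgx0 : g x = zero := aux_abs_eq_zero hord hzero (hM ▸ hM0)
      rw [ha0, hgx0]
  -- existence of y₀ with f y₀ = g x
  have hex : g x ∈ T := by
    classical
    set A : Finset X := (hfin x).toFinset.filter
      (fun y => max (g y) (neg (g y)) = M) with hA
    have hxA : x ∈ A := by
      rw [hA, Finset.mem_filter, Set.Finite.mem_toFinset]
      exact ⟨le_rfl, rfl⟩
    obtain ⟨y₀, hy₀A, hmin⟩ := A.exists_minimal ⟨x, hxA⟩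
    rw [hA, Finset.mem_filter, Set.Finite.mem_toFinset] at hy₀A
    obtain ⟨hy₀x, hy₀M⟩ := hy₀A
    have hy₀x' : y₀ ≤ x := hy₀x
    have hfy₀ : f y₀ = g y₀ := by
      refine (hstruct y₀).2 ?_
      intro z hz he
      have hzM : max (g z) (neg (g z)) = M := he.trans hy₀M
      have hzA : z ∈ A := by
        rw [hA, Finset.mem_filter, Set.Finite.mem_toFinset]
        exact ⟨hz.le.trans hy₀x', hzM⟩
      exact lt_irrefl _ (hz.lt.trans_le (hmin hzA hz.le))
    have hgy₀ : g y₀ = g x := hsign y₀ x hy₀x' (hy₀M.trans hM)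
    rw [hT]
    refine Multiset.mem_map.2 ⟨y₀, ?_, by rw [hfy₀, hgy₀]⟩
    rw [Finset.mem_val, Set.Finite.mem_toFinset]
    exact hy₀x'
  -- fold facts
  have hP : zero ≤ P := aux_self_le_fold_max _ _
  have hQ : Q ≤ zero := aux_fold_min_le_self _ _
  have hPmem : P = zero ∨ P ∈ T := by
    rcases aux_fold_max_mem (Multiset.filter (fun a => zero ≤ a) T) zero with h | h
    · exact Or.inl h
    · exact Or.inr (Multiset.mem_of_mem_filter h)
  have hQmem : Q = zero ∨ Q ∈ T := by
    rcases aux_fold_min_mem (Multiset.filter (fun a => a < zero) T) zero with h | h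
    · exact Or.inl h
    · exact Or.inr (Multiset.mem_of_mem_filter h)
  have hPabs : P ≤ M := by
    rcases hPmem with h | h
    · rw [h]; exact hMnonneg
    · exact le_trans (le_max_left _ _) (habsT P h)
  have hQabs : neg Q ≤ M := by
    rcases hQmem with h | h
    · rw [h, hzero]; exact hMnonneg
    · exact le_trans (le_max_right _ _) (habsT Q h)
  rcases lt_trichotomy (g x) zero with hgx | hgx | hgx
  · -- g x < zero
    have hMeq : M = neg (g x) := aux_abs_of_nonpos hord hzero hgx.le
    have habspos : zero < neg (g x) := by
      have h' := aux_neg_lt hinv hord hgx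
      rwa [hzero] at h'
    have hQle : Q ≤ g x := aux_fold_min_le (Multiset.mem_filter.2 ⟨hex, hgx⟩)
    have hQeq : Q = g x := by
      have h1 : neg (g x) ≤ neg Q := (hord Q (g x)).1 hQle
      have h2 : neg Q = neg (g x) := le_antisymm (hMeq ▸ hQabs) h1
      exact aux_neg_inj hinv h2
    have hPlt : P < neg Q := by
      rw [hQeq, ← hMeq]
      refine lt_of_le_of_ne hPabs ?_
      intro hPM
      rcases hPmem with h | h
      · rw [h] at hPM
        have h4 : neg (g x) = zero := by rw [← hMeq, ← hPM]
        rw [h4] at habspos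
        exact absurd habspos (lt_irrefl _)
      · have : P = g x := heqT P h (by rw [aux_abs_of_nonneg hord hzero hP, hPM])
        rw [this] at hP
        exact absurd (hP.trans_lt hgx) (lt_irrefl _)
    rw [if_neg (not_lt.2 hPlt.le), if_pos hPlt]
    exact hQeq
  · -- g x = zero
    have hM0 : M = zero := by rw [hM, hgx, hzero, max_self]
    have hT0 : ∀ a ∈ T, a = zero := fun a ha =>
      aux_abs_eq_zero hord hzero (hM0 ▸ habsT a ha)
    have hP0 : P = zero := by
      rcases hPmem with h | h
      · exact h
      · exact hT0 P h
    have hQ0 : Q = zero := by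
      rcases hQmem with h | h
      · exact h
      · exact hT0 Q h
    rw [hP0, hQ0, hzero, if_neg (lt_irrefl zero), if_neg (lt_irrefl zero)]
    exact hgx.symm
  · -- zero < g x
    have hMeq : M = g x := aux_abs_of_nonneg hord hzero hgx.le
    have hPeq : P = g x := le_antisymm (hMeq ▸ hPabs)
      (aux_le_fold_max (Multiset.mem_filter.2 ⟨hex, hgx.le⟩))
    have hlt : neg Q < P := by
      rw [hPeq, ← hMeq]
      refine lt_of_le_of_ne hQabs ?_
      intro hQM
      rcases hQmem with h | h
      · rw [h, hzero] at hQM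
        have h4 : g x = zero := by rw [← hMeq, ← hQM]
        rw [h4] at hgx
        exact absurd hgx (lt_irrefl _)
      · have hQ' : Q = g x := heqT Q h (by rw [aux_abs_of_nonpos hord hzero hQ, hQM])
        rw [hQ'] at hQ
        exact absurd (hgx.trans_le hQ) (lt_irrefl _)
    rw [if_pos hlt]
    exact hPeq
end

section
/- Solution set of the ordinal inversion equation for nonnegative isotone functions: let X be a finite poset with a least element, M a linear order with least element 0, and g : X → M isotone. Define m⋆ : X → M by m⋆(x) := g(x) if g(y) < g(x) for every y ⋖ x, and m⋆(x) := 0 otherwise. Then for every f : X → M: (max over {y : y ≤ x} of f(y)) = g(x) for all x ∈ X if and only if m⋆(x) ≤ f(x) ≤ g(x) for all x ∈ X. In particular the solutions form the interval [m⋆, g]. -/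
/-- for a finite poset `X` with a least element, a linear order
`M` with least element `⊥` (playing the role of `0`), and an isotone
`g : X → M`, the solutions `f` of `(max_{y ≤ x} f y) = g x` are exactly the
functions in the interval `[m⋆, g]`, where `m⋆ x = g x` if `g y < g x` for
every `y ⋖ x` and `m⋆ x = ⊥` otherwise. -/
theorem ordinal_inversion_solution_interval {X M : Type*}
    [PartialOrder X] [Fintype X] [OrderBot X]
    [DecidableRel ((· ≤ ·) : X → X → Prop)]
    [LinearOrder M] [OrderBot M]
    (g : X → M) (hg : Monotone g)
    (mstar : X → M)
    (h1 : ∀ x, (∀ y, y ⋖ x → g y < g x) → mstar x = g x)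
    (h2 : ∀ x, ¬ (∀ y, y ⋖ x → g y < g x) → mstar x = ⊥) :
    ∀ f : X → M,
      (∀ x, (Finset.univ.filter (fun y => y ≤ x)).sup f = g x) ↔
      (∀ x, mstar x ≤ f x ∧ f x ≤ g x) := by
  classical
  haveI : LocallyFiniteOrder X := Fintype.toLocallyFiniteOrder
  intro f
  constructor
  · intro hf x
    refine ⟨?_, ?_⟩
    · by_cases hc : ∀ y, y ⋖ x → g y < g x
      · rw [h1 x hc]
        obtain ⟨y, hy, hyeq⟩ := Finset.exists_mem_eq_sup
          (Finset.univ.filter (fun y => y ≤ x)) ⟨x, by simp⟩ f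
        rw [Finset.mem_filter] at hy
        rcases eq_or_lt_of_le hy.2 with rfl | hlt
        · rw [hf y] at hyeq
          exact le_of_eq hyeq
        · exfalso
          obtain ⟨z, hyz, hzx⟩ := exists_le_covBy_of_lt hlt
          have h3 : f y ≤ g z := by
            rw [← hf z]
            exact Finset.le_sup (by simp [hyz])
          have h4 := hc z hzx
          rw [← hyeq, hf x] at h3
          exact absurd h4 (not_lt.mpr h3)
      · rw [h2 x hc]; exact bot_le
    · rw [← hf x]
      exact Finset.le_sup (by simp)
  · intro hf
    have key : ∀ x, g x ≤ (Finset.univ.filter (fun y => y ≤ x)).sup f := by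
      intro x
      induction x using WellFoundedLT.induction with
      | ind x ih =>
        by_cases hc : ∀ y, y ⋖ x → g y < g x
        · calc g x = mstar x := (h1 x hc).symm
            _ ≤ f x := (hf x).1
            _ ≤ _ := Finset.le_sup (by simp)
        · push_neg at hc
          obtain ⟨y, hyx, hgy⟩ := hc
          have : g x ≤ g y := hgy
          calc g x ≤ g y := this
            _ ≤ (Finset.univ.filter (fun z => z ≤ y)).sup f := ih y hyx.lt
            _ ≤ _ := Finset.sup_mono (by
                intro z hz
                simp only [Finset.mem_filter, Finset.mem_univ, true_and] at hz ⊢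
                exact hz.trans hyx.le)
    intro x
    refine le_antisymm (Finset.sup_le ?_) (key x)
    intro y hy
    rw [Finset.mem_filter] at hy
    exact (hf y).2.trans (hg hy.2)
end

section
/- The Möbius transform of a possibility (maxitive) measure is carried by the singletons: let N be a finite set, M a linear order with least element 0 and greatest element 1, and Π a map from subsets of N to M with Π(∅) = 0, Π(N) = 1, and Π(A ∪ B) = max(Π(A), Π(B)) for all A, B ⊆ N. Define the canonical Möbius transform m(A) := Π(A) if Π(A \ {j}) < Π(A) for every j ∈ A, and m(A) := 0 otherwise. Then m({i}) = Π({i}) for every i ∈ N, and m(A) = 0 for every A ⊆ N that is not a singleton. -/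
/-- the canonical Möbius transform of a possibility (maxitive)
measure is carried by the singletons: `m {i} = Π {i}` for every `i`, and
`m A = ⊥` for every non-singleton `A`. -/
theorem mobius_transform_of_possibility_measure {N M : Type*}
    [Fintype N] [DecidableEq N] [LinearOrder M] [BoundedOrder M]
    (Pi : Finset N → M)
    (h0 : Pi ∅ = ⊥) (h1 : Pi Finset.univ = ⊤)
    (hmax : ∀ A B : Finset N, Pi (A ∪ B) = max (Pi A) (Pi B))
    (m : Finset N → M)
    (hm1 : ∀ A : Finset N, (∀ j ∈ A, Pi (A.erase j) < Pi A) → m A = Pi A)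
    (hm2 : ∀ A : Finset N, ¬ (∀ j ∈ A, Pi (A.erase j) < Pi A) → m A = ⊥) :
    (∀ i : N, m {i} = Pi {i}) ∧
    (∀ A : Finset N, (∀ i : N, A ≠ {i}) → m A = ⊥) := by
  constructor
  · intro i
    rcases eq_or_lt_of_le (bot_le : (⊥ : M) ≤ Pi {i}) with h | h
    · rw [hm2 _ ?_, h]
      intro hall
      have := hall i (Finset.mem_singleton_self i)
      rw [Finset.erase_singleton, h0, ← h] at this
      exact lt_irrefl _ this
    · apply hm1
      intro j hj
      rw [Finset.mem_singleton] at hj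
      subst hj
      rwa [Finset.erase_singleton, h0]
  · intro A hA
    rcases eq_or_ne A ∅ with rfl | hne
    · rw [hm1 _ (by simp), h0]
    · -- A has at least 2 elements
      obtain ⟨j, hj⟩ := Finset.nonempty_iff_ne_empty.2 hne
      have h2 : ∃ k ∈ A, k ≠ j := by
        by_contra hc
        push_neg at hc
        exact hA j (Finset.eq_singleton_iff_unique_mem.2 ⟨hj, hc⟩)
      obtain ⟨k, hk, hkj⟩ := h2
      apply hm2
      intro hall
      have hunion : A.erase j ∪ A.erase k = A := by
        ext x
        simp only [Finset.mem_union, Finset.mem_erase]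
        constructor
        · rintro (⟨_, h⟩ | ⟨_, h⟩) <;> exact h
        · intro hx
          rcases eq_or_ne x j with rfl | hxj
          · exact Or.inr ⟨Ne.symm hkj, hx⟩
          · exact Or.inl ⟨hxj, hx⟩
      have := hmax (A.erase j) (A.erase k)
      rw [hunion] at this
      rcases max_choice (Pi (A.erase j)) (Pi (A.erase k)) with h | h <;>
        rw [h] at this
      · exact absurd this.symm (ne_of_lt (hall j hj))
      · exact absurd this.symm (ne_of_lt (hall k hk))
end

section
/- The Möbius transform of a necessity measure is carried by a chain of upper sets: let N = {0, 1, …, n−1} (n ≥ 1), M a linear order with least element 0 and greatest element 1, equipped with a conjugation c : M → M (an order-reversing involution, hence c(0) = 1 and c(1) = 0). Let Π be a possibility measure on subsets of N (Π(∅) = 0, Π(N) = 1, Π(A ∪ B) = max(Π(A), Π(B))) whose singleton values are strictly ordered: 0 < Π({0}) < Π({1}) < ⋯ < Π({n−1}) = 1. Define the conjugate necessity measure Nec(A) := c(Π(N \ A)), and its canonical Möbius transform m(A) := Nec(A) if Nec(A \ {j}) < Nec(A) for every j ∈ A, and m(A) := 0 otherwise. Then m(A) = Nec(A) = c(Π({0,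 …, k−1})) whenever A = {j : j ≥ k} for some k ∈ {0, …, n} (in particular m(N) = 1 and m(∅) = 0), and m(A) = 0 for every other subset A. -/
/-- the canonical Möbius transform of the necessity measure
`Nec A = c (Π Aᶜ)` conjugate to a possibility measure `Π` with strictly
ordered singleton values is carried by the chain of upper sets
`{j : k ≤ j}`, `k = 0, …, n`, where it takes the value
`c (Π {0, …, k−1})`, and vanishes elsewhere. -/
theorem mobius_transform_of_necessity_measure {M : Type*}
    [LinearOrder M] [BoundedOrder M]
    (c : M → M)
    (hc_inv : ∀ x, c (c x) = x)
    (hc_ord : ∀ x y, x ≤ y ↔ c y ≤ c x)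
    (n : ℕ) (hn : 1 ≤ n)
    (Pi : Finset (Fin n) → M)
    (h0 : Pi ∅ = ⊥) (h1 : Pi Finset.univ = ⊤)
    (hmax : ∀ A B : Finset (Fin n), Pi (A ∪ B) = max (Pi A) (Pi B))
    (hstrict : ∀ i j : Fin n, i < j → Pi {i} < Pi {j})
    (hpos : ⊥ < Pi {(⟨0, hn⟩ : Fin n)})
    (htop : Pi {(⟨n - 1, by omega⟩ : Fin n)} = ⊤)
    (Nec : Finset (Fin n) → M)
    (hNec : ∀ A : Finset (Fin n), Nec A = c (Pi Aᶜ))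
    (m : Finset (Fin n) → M)
    (hm1 : ∀ A : Finset (Fin n), (∀ j ∈ A, Nec (A.erase j) < Nec A) → m A = Nec A)
    (hm2 : ∀ A : Finset (Fin n), ¬ (∀ j ∈ A, Nec (A.erase j) < Nec A) → m A = ⊥) :
    (∀ k : ℕ, k ≤ n →
      m (Finset.univ.filter (fun j : Fin n => k ≤ j.val)) =
        Nec (Finset.univ.filter (fun j : Fin n => k ≤ j.val)) ∧
      Nec (Finset.univ.filter (fun j : Fin n => k ≤ j.val)) =
        c (Pi (Finset.univ.filter (fun j : Fin n => j.val < k)))) ∧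
    (∀ A : Finset (Fin n),
      (∀ k : ℕ, k ≤ n → A ≠ Finset.univ.filter (fun j : Fin n => k ≤ j.val)) →
      m A = ⊥) := by

  -- strict order reversal by c
  have hc_lt : ∀ x y : M, x < y ↔ c y < c x := by
    intro x y
    rw [lt_iff_not_ge, hc_ord y x, ← lt_iff_not_ge]
  -- monotonicity of Pi
  have hmono : ∀ A B : Finset (Fin n), A ⊆ B → Pi A ≤ Pi B := by
    intro A B h
    have h2 := hmax A B
    rw [Finset.union_eq_right.mpr h] at h2
    rw [h2]
    exact le_max_left _ _
  -- all singletons are positive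
  have hposall : ∀ j : Fin n, ⊥ < Pi {j} := by
    intro j
    have h0j : (⟨0, hn⟩ : Fin n) ≤ j := by simp [Fin.le_def]
    rcases eq_or_lt_of_le h0j with h | h
    · rwa [← h]
    · exact lt_trans hpos (hstrict _ _ h)
  -- Pi A < Pi {j} when all singletons of A are below Pi {j}
  have hPi_lt : ∀ (A : Finset (Fin n)) (j : Fin n),
      (∀ i ∈ A, Pi {i} < Pi {j}) → Pi A < Pi {j} := by
    intro A
    induction A using Finset.induction_on with
    | empty => intro j _; rw [h0]; exact hposall j
    | @insert a s ha ih =>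
        intro j hA
        rw [Finset.insert_eq, hmax]
        exact max_lt (hA a (Finset.mem_insert_self a s))
          (ih j fun i hi => hA i (Finset.mem_insert_of_mem hi))
  constructor
  · intro k hk
    have hUc : (Finset.univ.filter (fun j : Fin n => k ≤ j.val))ᶜ =
        Finset.univ.filter (fun j : Fin n => j.val < k) := by
      ext i
      simp only [Finset.mem_compl, Finset.mem_filter, Finset.mem_univ, true_and, not_le]
    set U := Finset.univ.filter (fun j : Fin n => k ≤ j.val) with hU
    have hkey : ∀ j ∈ U, Nec (U.erase j) < Nec U := by
      intro j hj
      have hjk : k ≤ j.val := (Finset.mem_filter.mp hj).2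
      have hlt : Pi Uᶜ < Pi {j} := by
        apply hPi_lt
        intro i hi
        rw [hUc] at hi
        have : i.val < k := (Finset.mem_filter.mp hi).2
        exact hstrict i j (by rw [Fin.lt_def]; omega)
      have hlt2 : Pi Uᶜ < Pi (insert j Uᶜ) := by
        rw [Finset.insert_eq, hmax]
        exact lt_max_iff.mpr (Or.inl hlt)
      rw [hNec, hNec, Finset.compl_erase]
      exact (hc_lt _ _).mp hlt2
    refine ⟨hm1 U hkey, ?_⟩
    rw [hNec, hUc]
  · intro A hA
    apply hm2
    intro hall
    -- A is an upper set
    have hup : ∀ j ∈ A, ∀ i : Fin n, j < i → i ∈ A := by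
      intro j hj i hji
      by_contra hi
      have hic : i ∈ Aᶜ := Finset.mem_compl.mpr hi
      have h1 : Pi {j} < Pi Aᶜ :=
        lt_of_lt_of_le (hstrict j i hji) (hmono _ _ (Finset.singleton_subset_iff.mpr hic))
      have h2 : Pi (insert j Aᶜ) = Pi Aᶜ := by
        rw [Finset.insert_eq, hmax]
        exact max_eq_right h1.le
      have := hall j hj
      rw [hNec, hNec, Finset.compl_erase, h2] at this
      exact lt_irrefl _ this
    rcases Finset.eq_empty_or_nonempty A with he | hne
    · apply hA n le_rfl
      rw [he]
      ext i
      simp [Nat.not_le.mpr i.isLt]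
    · set j0 := A.min' hne with hj0
      have hkn : j0.val ≤ n := le_of_lt j0.isLt
      apply hA j0.val hkn
      ext i
      simp only [Finset.mem_filter, Finset.mem_univ, true_and]
      constructor
      · intro hi
        exact Finset.min'_le A i hi
      · intro hi
        have hle : j0 ≤ i := hi
        rcases eq_or_lt_of_le hle with h | h
        · rw [← h]; exact A.min'_mem hne
        · exact hup j0 (A.min'_mem hne) i h
end
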